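/- arXiv:2005.12786 — 13 statements merged into one kernel-verified Lean document; each statement's English description precedes it below -/
import Mathlib

section
/- Let H₁ and H₂ be complex Hilbert spaces, let T₁ be a bounded left-invertible operator on H₁ and T₂ a bounded left-invertible operator on H₂, and let V : H₁ → H₂ be a bounded invertible linear operator (continuous linear isomorphism) such that T₂ = V ∘ T₁ ∘ V⁻¹. Suppose M is a closed subspace of H₁ that is nearly T₁⁻¹-invariant with defect p, with defect space F. Then V(M) is a closed subspace of H₂, V(F) is a p-dimensional subspace of H₂, every g ∈ H₂ with T₂ g ∈ V(M) satisfies g ∈ V(M) + V(F), and consequently there exists a subspace F′ of H₂ orthogonal to V(M) with dim F′ ≤ p such that every g ∈ H₂ with T₂ g ∈ V(M) satisfies g ∈ V(M) + F′ (i.e. V(M) is nearly T₂⁻¹-invariant with defect at most p). -/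
/-- Nearly `T⁻¹`-invariant subspaces with defect transfer under similarity. -/
theorem stmt_0
    {H₁ H₂ : Type*} [NormedAddCommGroup H₁] [InnerProductSpace ℂ H₁] [CompleteSpace H₁]
    [NormedAddCommGroup H₂] [InnerProductSpace ℂ H₂] [CompleteSpace H₂]
    (T₁ : H₁ →L[ℂ] H₁) (T₂ : H₂ →L[ℂ] H₂)
    (hT₁ : ∃ L : H₁ →L[ℂ] H₁, L.comp T₁ = ContinuousLinearMap.id ℂ H₁)
    (hT₂ : ∃ L : H₂ →L[ℂ] H₂, L.comp T₂ = ContinuousLinearMap.id ℂ H₂)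
    (V : H₁ ≃L[ℂ] H₂)
    (hV : ∀ x : H₂, T₂ x = V (T₁ (V.symm x)))
    (M F : Submodule ℂ H₁) (hMclosed : IsClosed (M : Set H₁))
    (p : ℕ) (hFdim : Module.finrank ℂ F = p) (hFM : F ≤ Mᗮ)
    (hnear : ∀ f : H₁, T₁ f ∈ M → f ∈ M ⊔ F) :
    IsClosed ((M.map (V : H₁ →ₗ[ℂ] H₂) : Submodule ℂ H₂) : Set H₂) ∧
    Module.finrank ℂ (F.map (V : H₁ →ₗ[ℂ] H₂)) = p ∧
    (∀ g : H₂, T₂ g ∈ M.map (V : H₁ →ₗ[ℂ] H₂) →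
      g ∈ M.map (V : H₁ →ₗ[ℂ] H₂) ⊔ F.map (V : H₁ →ₗ[ℂ] H₂)) ∧
    ∃ F' : Submodule ℂ H₂, F' ≤ (M.map (V : H₁ →ₗ[ℂ] H₂))ᗮ ∧
      Module.finrank ℂ F' ≤ p ∧
      ∀ g : H₂, T₂ g ∈ M.map (V : H₁ →ₗ[ℂ] H₂) →
        g ∈ M.map (V : H₁ →ₗ[ℂ] H₂) ⊔ F' := by
  set Vl := (V : H₁ →ₗ[ℂ] H₂) with hVl
  have hVinj : Function.Injective Vl := V.injective
  set N := M.map Vl with hN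
  set VF := F.map Vl with hVF
  -- closedness of N
  have hNset : (N : Set H₂) = (V : H₁ → H₂) '' (M : Set H₁) := rfl
  have hNclosed : IsClosed (N : Set H₂) := by
    rw [hNset]
    exact V.toHomeomorph.isClosedMap _ hMclosed
  haveI : CompleteSpace N := hNclosed.completeSpace_coe
  haveI : CompleteSpace (Nᗮ : Submodule ℂ H₂) :=
    (Submodule.isClosed_orthogonal N).completeSpace_coe
  -- finrank of VF
  have hVFdim : Module.finrank ℂ VF = p := by
    rw [← hFdim]
    exact (Submodule.equivMapOfInjective Vl hVinj F).finrank_eq.symm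
  -- near invariance
  have hnear₂ : ∀ g : H₂, T₂ g ∈ N → g ∈ N ⊔ VF := by
    intro g hg
    rw [hV g] at hg
    have h1 : T₁ (V.symm g) ∈ M := by
      obtain ⟨m, hm, hmg⟩ := hg
      have := hVinj hmg
      rwa [← this]
    have h2 := hnear _ h1
    have : Vl (V.symm g) ∈ (M ⊔ F).map Vl := Submodule.mem_map_of_mem h2
    rw [Submodule.map_sup] at this
    have hgg : Vl (V.symm g) = g := V.apply_symm_apply g
    rwa [hgg] at this
  refine ⟨hNclosed, hVFdim, hnear₂, ?_⟩
  -- construct F'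
  by_cases hFfin : FiniteDimensional ℂ F
  · -- take the orthogonal projection of VF to Nᗮ
    haveI : FiniteDimensional ℂ VF :=
      Module.Finite.map F Vl
    set P : H₂ →ₗ[ℂ] H₂ :=
      (Nᗮ).subtype ∘ₗ (Submodule.orthogonalProjectionOnto Nᗮ).toLinearMap with hP
    refine ⟨VF.map P, ?_, ?_, ?_⟩
    · intro x hx
      obtain ⟨y, _, rfl⟩ := hx
      exact ((Submodule.orthogonalProjectionOnto Nᗮ) y).2
    · calc Module.finrank ℂ (VF.map P) ≤ Module.finrank ℂ VF :=
            Submodule.finrank_map_le P VF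
        _ = p := hVFdim
    · intro g hg
      have hg2 := hnear₂ g hg
      rw [Submodule.mem_sup] at hg2 ⊢
      obtain ⟨n, hn, f, hf, rfl⟩ := hg2
      refine ⟨n + (Submodule.orthogonalProjectionOnto N f : H₂), ?_, P f, Submodule.mem_map_of_mem hf, ?_⟩
      · exact N.add_mem hn (Submodule.orthogonalProjectionOnto N f).2
      · have := N.starProjection_add_starProjection_orthogonal f
        simp only [Submodule.starProjection_apply] at this
        simp only [hP, LinearMap.coe_comp, Function.comp_apply, Submodule.coe_subtype,
          ContinuousLinearMap.coe_coe]
        rw [add_assoc, this]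
  · -- F is infinite dimensional, so p = 0 and Nᗮ is infinite dimensional
    have hp0 : p = 0 := by
      rw [← hFdim, Module.finrank_of_infinite_dimensional hFfin]
    refine ⟨Nᗮ, le_rfl, ?_, ?_⟩
    · -- Nᗮ is infinite dimensional
      have hNF : ¬ FiniteDimensional ℂ (Nᗮ : Submodule ℂ H₂) := by
        intro hfin
        -- the projection of VF into Nᗮ is injective since VF ⊓ N = ⊥
        have hdisj : VF ⊓ N = ⊥ := by
          rw [hVF, hN, ← Submodule.map_inf _ hVinj]
          have : F ⊓ M = ⊥ :=
            ((Submodule.orthogonal_disjoint M).symm.mono_left hFM).eq_bot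
          rw [this, Submodule.map_bot]
        have hinj : Function.Injective
            (((Submodule.orthogonalProjectionOnto Nᗮ).toLinearMap).comp VF.subtype) := by
          intro x y hxy
          have hsub : ((x : H₂) - y) ∈ Nᗮᗮ := by
            rw [← Submodule.orthogonalProjectionOnto_eq_zero_iff]
            rw [map_sub]
            simp only [LinearMap.coe_comp, Function.comp_apply, Submodule.coe_subtype,
              ContinuousLinearMap.coe_coe] at hxy
            rw [sub_eq_zero]
            exact_mod_cast hxy
          rw [Submodule.orthogonal_orthogonal_eq_closure,
            hNclosed.submodule_topologicalClosure_eq] at hsub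
          have : ((x : H₂) - y) ∈ VF ⊓ N := ⟨VF.sub_mem x.2 y.2, hsub⟩
          rw [hdisj] at this
          exact Subtype.ext (sub_eq_zero.mp this)
        have : FiniteDimensional ℂ VF := FiniteDimensional.of_injective _ hinj
        exact hFfin (Module.Finite.equiv (Submodule.equivMapOfInjective Vl hVinj F).symm)
      rw [Module.finrank_of_infinite_dimensional hNF, hp0]
    · intro g _
      rw [Submodule.sup_orthogonal_of_hasOrthogonalProjection]
      trivial
end

section
/- Let H be a complex Hilbert space and let T be a bounded operator on H which is an isometry such that ‖(T*)ⁿ h‖ → 0 as n → ∞ for every h ∈ H (equivalently ⋂ₙ Tⁿ(H) = {0}), and such that dim ker T* = m for a natural number m ≥ 1. Then there exists a unitary operator (isometric linear equivalence) U : H → ℓ²(ℕ, ℂᵐ) such that U(T h) = S(U h) for all h ∈ H, where S is the forward shift on ℓ²(ℕ, ℂᵐ) given by (S a)(0) = 0 and (S a)(n+1) = a(n). -/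
open scoped InnerProductSpace

/-- Any shift operator of multiplicity `m ≥ 1` is unitarily equivalent to the
forward shift on `ℓ²(ℕ, ℂᵐ)`. -/
theorem stmt_3 {H : Type*} [NormedAddCommGroup H] [InnerProductSpace ℂ H] [CompleteSpace H]
    (m : ℕ) (hm : 1 ≤ m) (T : H →L[ℂ] H)
    (hTiso : ∀ h : H, ‖T h‖ = ‖h‖)
    (hTpure : ∀ h : H, Filter.Tendsto
      (fun n : ℕ => ‖((ContinuousLinearMap.adjoint T) ^ n) h‖) Filter.atTop (nhds 0))
    (hker : Module.finrank ℂ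
      (LinearMap.ker (ContinuousLinearMap.adjoint T : H →ₗ[ℂ] H) : Submodule ℂ H) = m) :
    ∃ U : H ≃ₗᵢ[ℂ] lp (fun _ : ℕ => EuclideanSpace ℂ (Fin m)) 2,
      ∀ h : H, (U (T h) : ∀ _ : ℕ, EuclideanSpace ℂ (Fin m)) 0 = 0 ∧
        ∀ n : ℕ, (U (T h) : ∀ _ : ℕ, EuclideanSpace ℂ (Fin m)) (n + 1)
          = (U h : ∀ _ : ℕ, EuclideanSpace ℂ (Fin m)) n := by
  classical
  set A := ContinuousLinearMap.adjoint T with hAdef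
  set W : Submodule ℂ H := LinearMap.ker (A : H →ₗ[ℂ] H) with hWdef
  -- basic facts about T
  have hinner : ∀ x y : H, ⟪T x, T y⟫_ℂ = ⟪x, y⟫_ℂ := fun x y =>
    LinearIsometry.inner_map_map ⟨T.toLinearMap, hTiso⟩ x y
  have hAT : ∀ x : H, A (T x) = x := by
    intro x
    apply ext_inner_left ℂ
    intro v
    rw [ContinuousLinearMap.adjoint_inner_right, hinner]
  have hTn : ∀ (n : ℕ) (x : H), ‖(T ^ n) x‖ = ‖x‖ := by
    intro n
    induction n with
    | zero => intro x; simp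
    | succ n ih =>
      intro x
      rw [pow_succ, ContinuousLinearMap.mul_apply, ih, hTiso]
  have hTnx : ∀ (n : ℕ) (x : H), (T ^ (n + 1)) x = T ((T ^ n) x) := by
    intro n x
    rw [pow_succ', ContinuousLinearMap.mul_apply]
  have hinner_n : ∀ (n : ℕ) (x y : H), ⟪(T ^ n) x, (T ^ n) y⟫_ℂ = ⟪x, y⟫_ℂ := fun n x y =>
    LinearIsometry.inner_map_map ⟨(T ^ n).toLinearMap, hTn n⟩ x y
  have hAn : ∀ (n : ℕ) (g : H), (A ^ n) ((T ^ n) g) = g := by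
    intro n
    induction n with
    | zero => intro g; simp
    | succ n ih =>
      intro g
      rw [hTnx, pow_succ, ContinuousLinearMap.mul_apply, hAT, ih]
  -- key orthogonality fact
  have hkey : ∀ (k : ℕ) (u : H), u ∈ W → ∀ v : H, ⟪u, (T ^ (k + 1)) v⟫_ℂ = 0 := by
    intro k u hu v
    rw [hTnx, ← ContinuousLinearMap.adjoint_inner_left, ← hAdef,
      (show A u = 0 from LinearMap.mem_ker.mp hu), inner_zero_left]
  -- the wandering subspace
  have hWfin : FiniteDimensional ℂ W := FiniteDimensional.of_finrank_pos (by omega)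
  let e : EuclideanSpace ℂ (Fin m) ≃ₗᵢ[ℂ] W :=
    ((stdOrthonormalBasis ℂ W).reindex (finCongr hker)).repr.symm
  have heW : ∀ y : EuclideanSpace ℂ (Fin m), ((e y : W) : H) ∈ W := fun y => (e y).2
  let V : ∀ _ : ℕ, EuclideanSpace ℂ (Fin m) →ₗᵢ[ℂ] H := fun n =>
    (LinearIsometry.comp ⟨(T ^ n).toLinearMap, hTn n⟩ W.subtypeₗᵢ).comp e.toLinearIsometry
  have hVapp : ∀ (n : ℕ) (y : EuclideanSpace ℂ (Fin m)), V n y = (T ^ n) ((e y : W) : H) :=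
    fun n y => rfl
  -- orthogonal family
  have hortho : OrthogonalFamily ℂ (fun _ : ℕ => EuclideanSpace ℂ (Fin m)) V := by
    have main : ∀ i j : ℕ, i < j → ∀ (x y : EuclideanSpace ℂ (Fin m)),
        ⟪V i x, V j y⟫_ℂ = 0 := by
      intro i j hij x y
      obtain ⟨k, rfl⟩ : ∃ k, j = i + (k + 1) :=
        ⟨j - i - 1, by omega⟩
      rw [hVapp, hVapp, pow_add, ContinuousLinearMap.mul_apply, hinner_n]
      exact hkey k _ (heW x) _
    intro i j hij x y
    rcases lt_or_gt_of_ne hij with h | h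
    · exact main i j h x y
    · rw [← inner_conj_symm, main j i h y x, map_zero]
  -- totality
  have htotal : ⊤ ≤ (⨆ n, LinearMap.range (V n).toLinearMap).topologicalClosure := by
    rw [top_le_iff, Submodule.topologicalClosure_eq_top_iff, Submodule.eq_bot_iff]
    intro h hh
    have hVh : ∀ (n : ℕ) (y : EuclideanSpace ℂ (Fin m)), ⟪V n y, h⟫_ℂ = 0 := by
      intro n y
      exact (Submodule.mem_orthogonal _ h).mp hh _
        (Submodule.mem_iSup_of_mem n ⟨y, rfl⟩)
    have hWh : ∀ (n : ℕ) (w : H), w ∈ W → ⟪(T ^ n) w, h⟫_ℂ = 0 := by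
      intro n w hw
      have := hVh n (e.symm ⟨w, hw⟩)
      rwa [hVapp, e.apply_symm_apply] at this
    -- h is in the range of every power of T
    have hrange : ∀ n : ℕ, ∃ g : H, (T ^ n) g = h := by
      intro n
      induction n with
      | zero => exact ⟨h, by simp⟩
      | succ n ih =>
        obtain ⟨g, hg⟩ := ih
        have horth : ∀ w ∈ W, ⟪w, g⟫_ℂ = 0 := by
          intro w hw
          rw [← hinner_n n w g, hg]
          exact hWh n w hw
        have hd : g - T (A g) ∈ W := by
          rw [hWdef, LinearMap.mem_ker, ContinuousLinearMap.coe_coe, map_sub, hAT, sub_self]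
        have hdg : g = T (A g) := by
          have h1 : ⟪g - T (A g), g⟫_ℂ = 0 := horth _ hd
          have h2 : ⟪g - T (A g), T (A g)⟫_ℂ = 0 := by
            rw [← ContinuousLinearMap.adjoint_inner_left, ← hAdef,
              (show A (g - T (A g)) = 0 from LinearMap.mem_ker.mp hd), inner_zero_left]
          have : ⟪g - T (A g), g - T (A g)⟫_ℂ = 0 := by
            rw [inner_sub_right, h1, h2, sub_zero]
          exact sub_eq_zero.mp (inner_self_eq_zero.mp this)
        exact ⟨A g, by rw [pow_succ, ContinuousLinearMap.mul_apply, ← hdg, hg]⟩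
    -- purity forces h = 0
    have hnorm : ∀ n : ℕ, ‖(A ^ n) h‖ = ‖h‖ := by
      intro n
      obtain ⟨g, hg⟩ := hrange n
      rw [← hg, hAn, ← hTn n g, hg]
    have : Filter.Tendsto (fun _ : ℕ => ‖h‖) Filter.atTop (nhds 0) := by
      have := hTpure h
      simpa only [← hAdef, hnorm] using this
    have h0 : ‖h‖ = 0 := tendsto_nhds_unique tendsto_const_nhds this
    exact norm_eq_zero.mp h0
  have hV : IsHilbertSum ℂ (fun _ : ℕ => EuclideanSpace ℂ (Fin m)) V :=
    IsHilbertSum.mk hortho htotal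
  set U := hV.linearIsometryEquiv with hUdef
  have hUinner : ∀ (x : H) (n : ℕ) (y : EuclideanSpace ℂ (Fin m)),
      ⟪y, (U x : ∀ _ : ℕ, EuclideanSpace ℂ (Fin m)) n⟫_ℂ = ⟪V n y, x⟫_ℂ := by
    intro x n y
    have h1 : U (V n y) = lp.single 2 n y := by
      rw [← hV.linearIsometryEquiv_symm_apply_single, LinearIsometryEquiv.apply_symm_apply]
    calc ⟪y, (U x : ∀ _ : ℕ, EuclideanSpace ℂ (Fin m)) n⟫_ℂ
        = ⟪lp.single 2 n y, U x⟫_ℂ := (lp.inner_single_left n y (U x)).symm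
      _ = ⟪U (V n y), U x⟫_ℂ := by rw [h1]
      _ = ⟪V n y, x⟫_ℂ := U.inner_map_map _ _
  refine ⟨U, fun h => ⟨?_, fun n => ?_⟩⟩
  · apply ext_inner_left ℂ
    intro y
    rw [inner_zero_right, hUinner, hVapp, pow_zero, ContinuousLinearMap.one_apply,
      ← ContinuousLinearMap.adjoint_inner_left, ← hAdef,
      (show A (e y : H) = 0 from LinearMap.mem_ker.mp (heW y)), inner_zero_left]
  · apply ext_inner_left ℂ
    intro y
    rw [hUinner, hUinner, hVapp, hVapp, hTnx, hinner]
end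

section
/- Let H be a complex Hilbert space, let T be a bounded operator on H with ‖h‖ ≤ ‖T h‖ for all h ∈ H, and let M be a closed subspace of H. Then T(H) and M ∩ T(H) are closed subspaces of H, and there exists a unique bounded operator R on H such that T ∘ R equals the orthogonal projection of H onto M ∩ T(H); moreover ‖R‖ ≤ 1. (R is given explicitly by R = (T*T)⁻¹ T* P_{M ∩ T(H)}, where T*T is invertible because T is bounded below.) -/
/-- `P` is the orthogonal projection of the ambient space onto the subspace `L`. -/
def IsOrthoProjOn {H : Type*} [NormedAddCommGroup H] [InnerProductSpace ℂ H]
    (L : Submodule ℂ H) (P : H →L[ℂ] H) : Prop :=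
  (∀ x, P x ∈ L) ∧ ∀ x, x - P x ∈ Lᗮ

/-- for `T` bounded below by `1`, the subspaces `T(H)` and `M ∩ T(H)` are closed
and there is a unique bounded `R` with `T ∘ R = P_{M ∩ T(H)}`, which moreover has `‖R‖ ≤ 1`. -/
theorem stmt_8 {H : Type*} [NormedAddCommGroup H] [InnerProductSpace ℂ H] [CompleteSpace H]
    (T : H →L[ℂ] H) (hT : ∀ h : H, ‖h‖ ≤ ‖T h‖)
    (M : Submodule ℂ H) (hMclosed : IsClosed (M : Set H))
    (P : H →L[ℂ] H) (hP : IsOrthoProjOn (M ⊓ LinearMap.range (T : H →ₗ[ℂ] H)) P) :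
    IsClosed ((LinearMap.range (T : H →ₗ[ℂ] H) : Submodule ℂ H) : Set H) ∧
    IsClosed ((M ⊓ LinearMap.range (T : H →ₗ[ℂ] H) : Submodule ℂ H) : Set H) ∧
    ∃ R : H →L[ℂ] H, (T.comp R = P ∧ ‖R‖ ≤ 1) ∧
      ∀ R' : H →L[ℂ] H, T.comp R' = P → R' = R := by
  have hinj : Function.Injective T := by
    intro a b hab
    have h := hT (a - b)
    rw [map_sub, hab, sub_self, norm_zero] at h
    exact sub_eq_zero.mp (norm_le_zero_iff.mp h)
  have hanti : AntilipschitzWith 1 T :=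
    T.antilipschitz_of_bound (by simpa using hT)
  have hclosed : IsClosed ((LinearMap.range (T : H →ₗ[ℂ] H) : Submodule ℂ H) : Set H) := by
    have := hanti.isClosed_range T.uniformContinuous
    rw [LinearMap.coe_range]
    exact this
  refine ⟨hclosed, ?_, ?_⟩
  · have : ((M ⊓ LinearMap.range (T : H →ₗ[ℂ] H) : Submodule ℂ H) : Set H)
        = (M : Set H) ∩ ((LinearMap.range (T : H →ₗ[ℂ] H) : Submodule ℂ H) : Set H) := rfl
    rw [this]
    exact hMclosed.inter hclosed
  · set K := LinearMap.range (T : H →ₗ[ℂ] H) with hK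
    haveI : CompleteSpace K := hclosed.completeSpace_coe
    set T' : H →L[ℂ] K := T.codRestrict K (fun x => LinearMap.mem_range_self (T : H →ₗ[ℂ] H) x) with hT'
    have hker : LinearMap.ker (T' : H →ₗ[ℂ] K) = ⊥ :=
      LinearMap.ker_eq_bot_of_injective (fun a b hab => hinj (congrArg Subtype.val hab))
    have hrange : LinearMap.range (T' : H →ₗ[ℂ] K) = ⊤ := by
      rw [LinearMap.range_eq_top]
      rintro ⟨y, hy⟩
      obtain ⟨x, hx⟩ := hy
      exact ⟨x, Subtype.ext hx⟩
    let e : H ≃L[ℂ] K := ContinuousLinearEquiv.ofBijective T' hker hrange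
    let Pk : H →L[ℂ] K := P.codRestrict K (fun x => (Submodule.mem_inf.mp (hP.1 x)).2)
    let R : H →L[ℂ] H := (e.symm : K →L[ℂ] H).comp Pk
    have hTR : T.comp R = P := by
      ext x
      have : T (e.symm (Pk x)) = (T' (e.symm (Pk x)) : H) := rfl
      have h2 : T' (e.symm (Pk x)) = Pk x := e.apply_symm_apply (Pk x)
      simp only [ContinuousLinearMap.comp_apply]
      show T (e.symm (Pk x)) = P x
      rw [this, h2]
      rfl
    have hPnorm : ∀ x, ‖P x‖ ≤ ‖x‖ := by
      intro x
      have horth : (inner ℂ (P x) (x - P x) : ℂ) = 0 :=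
        Submodule.inner_right_of_mem_orthogonal (hP.1 x) (hP.2 x)
      have hinner : (inner ℂ (P x) x : ℂ) = (inner ℂ (P x) (P x) : ℂ) := by
        have := inner_sub_right (𝕜 := ℂ) (P x) x (P x)
        rw [horth] at this
        linear_combination -this
      have hsq : ‖P x‖ ^ 2 = RCLike.re (K := ℂ) (inner ℂ (P x) x) := by
        rw [hinner]
        exact (inner_self_eq_norm_sq (𝕜 := ℂ) (P x)).symm
      have hcs : RCLike.re (K := ℂ) (inner ℂ (P x) x : ℂ) ≤ ‖P x‖ * ‖x‖ :=
        (RCLike.re_le_norm _).trans (norm_inner_le_norm _ _)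
      nlinarith [norm_nonneg (P x), norm_nonneg x]
    refine ⟨R, ⟨hTR, ?_⟩, ?_⟩
    · apply ContinuousLinearMap.opNorm_le_bound _ zero_le_one
      intro x
      have h1 : ‖R x‖ ≤ ‖T (R x)‖ := hT _
      have h2 : T (R x) = P x := by
        have := congrArg (fun f => f x) hTR
        simpa using this
      rw [h2] at h1
      simpa using h1.trans (hPnorm x)
    · intro R' hR'
      ext x
      apply hinj
      have h1 := congrArg (fun f => f x) hR'
      have h2 := congrArg (fun f => f x) hTR
      simp only [ContinuousLinearMap.comp_apply] at h1 h2
      rw [h1, h2]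
end

section
/- Let H be a complex Hilbert space, let T be a bounded operator on H with ‖h‖ ≤ ‖T h‖ for all h ∈ H, and let M be a closed subspace of H that is nearly T⁻¹-invariant with defect p, with defect space F orthogonal to M. Let R be the unique bounded operator on H with T ∘ R = P_{M ∩ T(H)}, let Q = P_{M ⊖ (M ∩ T(H))}, and let S′ = P_F. Then for every h ∈ M and every m ∈ ℕ: h = Σ_{k=0}^{m} T^k Q R^k h + T^{m+1} R^{m+1} h + Σ_{k=1}^{m} T^k S′ R^k h. -/
lemma isOrthoProjOn_eq {H : Type*} [NormedAddCommGroup H] [InnerProductSpace ℂ H]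
    {L : Submodule ℂ H} {P : H →L[ℂ] H} (hP : IsOrthoProjOn L P) {x a : H}
    (ha : a ∈ L) (hxa : x - a ∈ Lᗮ) : P x = a := by
  have h1 : P x - a ∈ L := L.sub_mem (hP.1 x) ha
  have h2 : P x - a ∈ Lᗮ := by
    have h3 := Lᗮ.sub_mem hxa (hP.2 x)
    have h4 : (x - a) - (x - P x) = P x - a := by abel
    rwa [h4] at h3
  have h5 : P x - a ∈ (⊥ : Submodule ℂ H) := (L.orthogonal_disjoint).le_bot ⟨h1, h2⟩
  exact sub_eq_zero.mp ((Submodule.mem_bot ℂ).mp h5)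

/-- the approximation identity
`h = Σ_{k=0}^{m} T^k Q R^k h + T^{m+1} R^{m+1} h + Σ_{k=1}^{m} T^k S' R^k h` for `h ∈ M`. -/
theorem stmt_9 {H : Type*} [NormedAddCommGroup H] [InnerProductSpace ℂ H] [CompleteSpace H]
    (T : H →L[ℂ] H) (hT : ∀ h : H, ‖h‖ ≤ ‖T h‖)
    (M F : Submodule ℂ H) (hMclosed : IsClosed (M : Set H))
    (p : ℕ) (hFdim : Module.finrank ℂ F = p) (hFM : F ≤ Mᗮ)
    (hnear : ∀ f : H, T f ∈ M → f ∈ M ⊔ F)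
    (P : H →L[ℂ] H) (hP : IsOrthoProjOn (M ⊓ LinearMap.range (T : H →ₗ[ℂ] H)) P)
    (R : H →L[ℂ] H) (hR : T.comp R = P)
    (Q : H →L[ℂ] H) (hQ : IsOrthoProjOn (M ⊓ (M ⊓ LinearMap.range (T : H →ₗ[ℂ] H))ᗮ) Q)
    (S' : H →L[ℂ] H) (hS' : IsOrthoProjOn F S') :
    ∀ h ∈ M, ∀ m : ℕ,
      h = (∑ k ∈ Finset.range (m + 1), (T ^ k) (Q ((R ^ k) h)))
        + (T ^ (m + 1)) ((R ^ (m + 1)) h)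
        + ∑ k ∈ Finset.Icc 1 m, (T ^ k) (S' ((R ^ k) h)) := by
  set N : Submodule ℂ H := M ⊓ LinearMap.range (T : H →ₗ[ℂ] H) with hN
  set L : Submodule ℂ H := M ⊓ Nᗮ with hL
  have hNM : N ≤ M := inf_le_left
  have hLM : L ≤ M := inf_le_left
  have hNLperp : N ≤ Lᗮ := le_trans (Submodule.le_orthogonal_orthogonal N)
    (Submodule.orthogonal_le inf_le_right)
  have hMperpN : Mᗮ ≤ Nᗮ := Submodule.orthogonal_le hNM
  have hMperpL : Mᗮ ≤ Lᗮ := Submodule.orthogonal_le hLM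
  have hMFperp : M ≤ Fᗮ := by
    intro a ha u hu
    exact (Submodule.mem_orthogonal' Mᗮ a).mpr
      (fun x hx => Submodule.mem_orthogonal M x |>.mp (by exact hx) a ha ▸ rfl) u (hFM hu)
  -- key decomposition for elements of M
  have hTR : ∀ x : H, T (R x) = P x := fun x => congrFun (congrArg DFunLike.coe hR) x
  have lemA : ∀ a ∈ M, a = Q a + T (R a) := by
    intro a ha
    have hQa : Q a = a - P a := by
      apply isOrthoProjOn_eq hQ
      · exact ⟨M.sub_mem ha (hNM (hP.1 a)), hP.2 a⟩
      · have : a - (a - P a) = P a := by abel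
        rw [this]; exact hNLperp (hP.1 a)
    rw [hQa, hTR]; abel
  -- key decomposition for elements with T g ∈ M
  have lemB : ∀ g : H, T g ∈ M → g = Q g + S' g + T (R g) := by
    intro g hTg
    obtain ⟨a, ha, b, hb, hab⟩ := Submodule.mem_sup.mp (hnear g hTg)
    have hbMperp : b ∈ Mᗮ := hFM hb
    have hPg : P g = P a := by
      apply isOrthoProjOn_eq hP (hP.1 a)
      have : g - P a = (a - P a) + b := by rw [← hab]; abel
      rw [this]
      exact Nᗮ.add_mem (hP.2 a) (hMperpN hbMperp)
    have hQg : Q g = a - P a := by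
      apply isOrthoProjOn_eq hQ ⟨M.sub_mem ha (hNM (hP.1 a)), hP.2 a⟩
      have : g - (a - P a) = P a + b := by rw [← hab]; abel
      rw [this]
      exact Lᗮ.add_mem (hNLperp (hP.1 a)) (hMperpL hbMperp)
    have hSg : S' g = b := by
      apply isOrthoProjOn_eq hS' hb
      have : g - b = a := by rw [← hab]; abel
      rw [this]
      exact hMFperp ha
    rw [hQg, hSg, hTR, hPg, ← hab]; abel
  intro h hM m
  induction m with
  | zero =>
      simpa using lemA h hM
  | succ m ih =>
      have hTg : T ((R ^ (m + 1)) h) ∈ M := by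
        have : (R ^ (m + 1)) h = R ((R ^ m) h) := by
          rw [pow_succ']; rfl
        rw [this, hTR]
        exact hNM (hP.1 _)
      have key := lemB _ hTg
      rw [Finset.sum_range_succ, Finset.sum_Icc_succ_top (Nat.le_add_left 1 m)]
      have hpow : ∀ x : H, (T ^ (m + 2)) ((R ^ (m + 2)) x) =
          (T ^ (m + 1)) (T (R ((R ^ (m + 1)) x))) := by
        intro x
        rw [pow_succ T (m + 1), pow_succ' R (m + 1)]
        rfl
      calc h = (∑ k ∈ Finset.range (m + 1), (T ^ k) (Q ((R ^ k) h)))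
            + (T ^ (m + 1)) ((R ^ (m + 1)) h)
            + ∑ k ∈ Finset.Icc 1 m, (T ^ k) (S' ((R ^ k) h)) := ih
        _ = _ := by
          rw [hpow]
          nth_rewrite 1 [key]
          simp only [map_add]
          abel
end

section
/- Let H be a complex Hilbert space, let T be a bounded operator on H with ‖h‖ ≤ ‖T h‖ for all h ∈ H, and let M be a closed subspace of H that is nearly T⁻¹-invariant with defect p, with defect space F orthogonal to M. Let R be the unique bounded operator on H with T ∘ R = P_{M ∩ T(H)}, let Q = P_{M ⊖ (M ∩ T(H))}, and let S′ = P_F. Then for every h ∈ M and every m ∈ ℕ: Σ_{k=0}^{m} ‖Q R^k h‖² + Σ_{k=1}^{m} ‖S′ R^k h‖² ≤ ‖h‖². Consequently, the infinite series Σ_{k=0}^{∞} ‖Q R^k h‖² + Σ_{k=1}^{∞} ‖S′ R^k h‖² converges and is at most ‖h‖². -/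
section aux
variable {H : Type*} [NormedAddCommGroup H] [InnerProductSpace ℂ H]

lemma iop_eq_self {L : Submodule ℂ H} {P : H →L[ℂ] H} (hP : IsOrthoProjOn L P)
    {x : H} (hx : x ∈ L) : P x = x := by
  have h1 : x - P x ∈ L := Submodule.sub_mem _ hx (hP.1 x)
  have h2 := hP.2 x
  have : (inner ℂ (x - P x) (x - P x) : ℂ) = 0 :=
    Submodule.inner_right_of_mem_orthogonal h1 h2
  have h3 : x - P x = 0 := inner_self_eq_zero.mp this
  linear_combination (norm := abel) -h3

lemma iop_eq_zero {L : Submodule ℂ H} {P : H →L[ℂ] H} (hP : IsOrthoProjOn L P)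
    {x : H} (hx : x ∈ Lᗮ) : P x = 0 := by
  have h1 : P x ∈ Lᗮ := by
    have := Submodule.sub_mem _ hx (hP.2 x)
    simpa using this
  have : (inner ℂ (P x) (P x) : ℂ) = 0 :=
    Submodule.inner_right_of_mem_orthogonal (hP.1 x) h1
  exact inner_self_eq_zero.mp this

lemma iop_pythag {L : Submodule ℂ H} {P : H →L[ℂ] H} (hP : IsOrthoProjOn L P)
    (x : H) : ‖x‖ ^ 2 = ‖P x‖ ^ 2 + ‖x - P x‖ ^ 2 := by
  have h : (inner ℂ (P x) (x - P x) : ℂ) = 0 :=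
    Submodule.inner_right_of_mem_orthogonal (hP.1 x) (hP.2 x)
  have := norm_add_sq_eq_norm_sq_add_norm_sq_of_inner_eq_zero (P x) (x - P x) h
  simpa [pow_two] using this

end aux

/-- the approximation inequality
`Σ_{k=0}^{m} ‖Q R^k h‖² + Σ_{k=1}^{m} ‖S' R^k h‖² ≤ ‖h‖²` for `h ∈ M`, together with the
convergence of the corresponding infinite series and the bound on its sum. -/
theorem stmt_10 {H : Type*} [NormedAddCommGroup H] [InnerProductSpace ℂ H] [CompleteSpace H]
    (T : H →L[ℂ] H) (hT : ∀ h : H, ‖h‖ ≤ ‖T h‖)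
    (M F : Submodule ℂ H) (hMclosed : IsClosed (M : Set H))
    (p : ℕ) (hFdim : Module.finrank ℂ F = p) (hFM : F ≤ Mᗮ)
    (hnear : ∀ f : H, T f ∈ M → f ∈ M ⊔ F)
    (P : H →L[ℂ] H) (hP : IsOrthoProjOn (M ⊓ LinearMap.range (T : H →ₗ[ℂ] H)) P)
    (R : H →L[ℂ] H) (hR : T.comp R = P)
    (Q : H →L[ℂ] H) (hQ : IsOrthoProjOn (M ⊓ (M ⊓ LinearMap.range (T : H →ₗ[ℂ] H))ᗮ) Q)
    (S' : H →L[ℂ] H) (hS' : IsOrthoProjOn F S') :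
    ∀ h ∈ M,
      (∀ m : ℕ,
        (∑ k ∈ Finset.range (m + 1), ‖Q ((R ^ k) h)‖ ^ 2)
          + ∑ k ∈ Finset.Icc 1 m, ‖S' ((R ^ k) h)‖ ^ 2 ≤ ‖h‖ ^ 2) ∧
      Summable (fun k : ℕ => ‖Q ((R ^ k) h)‖ ^ 2) ∧
      Summable (fun k : ℕ => ‖S' ((R ^ (k + 1)) h)‖ ^ 2) ∧
      (∑' k : ℕ, ‖Q ((R ^ k) h)‖ ^ 2) + (∑' k : ℕ, ‖S' ((R ^ (k + 1)) h)‖ ^ 2)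
        ≤ ‖h‖ ^ 2 := by
  have hTR : ∀ x, T (R x) = P x := fun x => congrFun (congrArg DFunLike.coe hR) x
  have hTinj : ∀ x : H, T x = 0 → x = 0 := fun x hx => by
    have := hT x; rw [hx, norm_zero] at this; exact norm_le_zero_iff.mp this
  have hMFo : M ≤ Fᗮ :=
    le_trans (Submodule.le_orthogonal_orthogonal M) (Submodule.orthogonal_le hFM)
  have hFPT : F ≤ (M ⊓ LinearMap.range (T : H →ₗ[ℂ] H))ᗮ :=
    le_trans hFM (Submodule.orthogonal_le inf_le_left)
  have hFQo : F ≤ (M ⊓ (M ⊓ LinearMap.range (T : H →ₗ[ℂ] H))ᗮ)ᗮ :=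
    le_trans hFM (Submodule.orthogonal_le inf_le_left)
  have hQPT : M ⊓ LinearMap.range (T : H →ₗ[ℂ] H) ≤ (M ⊓ (M ⊓ LinearMap.range (T : H →ₗ[ℂ] H))ᗮ)ᗮ :=
    le_trans (Submodule.le_orthogonal_orthogonal _) (Submodule.orthogonal_le inf_le_right)
  have hRF : ∀ f ∈ F, R f = 0 := fun f hf => by
    apply hTinj
    rw [hTR, iop_eq_zero hP (hFPT hf)]
  intro h hM
  -- the key one-step estimate
  have hstep : ∀ g : H, g - S' g ∈ M →
      (R g - S' (R g) ∈ M) ∧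
      ‖Q g‖ ^ 2 + ‖S' (R g)‖ ^ 2 + ‖R g - S' (R g)‖ ^ 2 ≤ ‖g - S' g‖ ^ 2 := by
    intro g hw
    set w := g - S' g with hwdef
    have hSg : S' g ∈ F := hS'.1 g
    have hgw : g - w = S' g := by rw [hwdef]; abel
    have hRg : R g = R w := by
      have h0 : R g - R w = 0 := by rw [← map_sub, hgw, hRF _ hSg]
      exact sub_eq_zero.mp h0
    have hQg : Q g = Q w := by
      have h0 : Q g - Q w = 0 := by rw [← map_sub, hgw, iop_eq_zero hQ (hFQo hSg)]
      exact sub_eq_zero.mp h0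
    have hPwM : P w ∈ M := (Submodule.mem_inf.mp (hP.1 w)).1
    have hTRwM : T (R w) ∈ M := by rw [hTR]; exact hPwM
    have hRgsup : R g ∈ M ⊔ F := by rw [hRg]; exact hnear _ hTRwM
    have hmemM : R g - S' (R g) ∈ M := by
      obtain ⟨m, hm, f, hf, hmf⟩ := Submodule.mem_sup.mp hRgsup
      rw [← hmf, map_add, iop_eq_zero hS' (hMFo hm), iop_eq_self hS' hf]
      simpa using hm
    have e1 : ‖R g‖ ^ 2 = ‖S' (R g)‖ ^ 2 + ‖R g - S' (R g)‖ ^ 2 := iop_pythag hS' (R g)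
    have e2 : ‖R g‖ ≤ ‖P w‖ := by
      rw [hRg]
      calc ‖R w‖ ≤ ‖T (R w)‖ := hT _
        _ = ‖P w‖ := by rw [hTR]
    have e2' : ‖R g‖ ^ 2 ≤ ‖P w‖ ^ 2 := pow_le_pow_left₀ (norm_nonneg _) e2 2
    have e3 : ‖w‖ ^ 2 = ‖P w‖ ^ 2 + ‖Q w‖ ^ 2 := by
      have hsub : w - P w ∈ M ⊓ (M ⊓ LinearMap.range (T : H →ₗ[ℂ] H))ᗮ :=
        Submodule.mem_inf.mpr ⟨Submodule.sub_mem _ hw hPwM, hP.2 w⟩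
      have hQw : Q w = w - P w := by
        have h1 : Q (P w) = 0 := iop_eq_zero hQ (hQPT (hP.1 w))
        have h2 : Q (w - P w) = w - P w := iop_eq_self hQ hsub
        calc Q w = Q (P w) + Q (w - P w) := by rw [← map_add]; congr 1; abel
          _ = w - P w := by rw [h1, h2, zero_add]
      rw [iop_pythag hP w, hQw]
    refine ⟨hmemM, ?_⟩
    rw [hQg]
    linarith
  have hSh : S' h = 0 := iop_eq_zero hS' (hMFo hM)
  have key : ∀ m : ℕ,
      ((R ^ (m + 1)) h - S' ((R ^ (m + 1)) h) ∈ M) ∧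
      (∑ k ∈ Finset.range (m + 1), ‖Q ((R ^ k) h)‖ ^ 2)
        + (∑ k ∈ Finset.Icc 1 (m + 1), ‖S' ((R ^ k) h)‖ ^ 2)
        + ‖(R ^ (m + 1)) h - S' ((R ^ (m + 1)) h)‖ ^ 2 ≤ ‖h‖ ^ 2 := by
    intro m
    induction m with
    | zero =>
      have hh : h - S' h ∈ M := by rw [hSh, sub_zero]; exact hM
      obtain ⟨h1, h2⟩ := hstep h hh
      have h2' : ‖Q h‖ ^ 2 + ‖S' (R h)‖ ^ 2 + ‖R h - S' (R h)‖ ^ 2 ≤ ‖h‖ ^ 2 := by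
        rwa [hSh, sub_zero] at h2
      constructor
      · simpa [pow_one] using h1
      · simpa [Finset.sum_range_one, Finset.Icc_self, Finset.sum_singleton, pow_one,
          pow_zero, ContinuousLinearMap.one_apply] using h2'
    | succ n ih =>
      obtain ⟨ihM, ihB⟩ := ih
      obtain ⟨s1, s2⟩ := hstep _ ihM
      have hpow : (R ^ (n + 1 + 1)) h = R ((R ^ (n + 1)) h) := by
        rw [pow_succ', ContinuousLinearMap.mul_apply]
      constructor
      · rw [hpow]; exact s1
      · rw [Finset.sum_range_succ, Finset.sum_Icc_succ_top (by omega : 1 ≤ n + 1 + 1), hpow]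
        linarith
  have hQnn : ∀ k : ℕ, (0 : ℝ) ≤ ‖Q ((R ^ k) h)‖ ^ 2 := fun k => by positivity
  have hSnn : ∀ k : ℕ, (0 : ℝ) ≤ ‖S' ((R ^ k) h)‖ ^ 2 := fun k => by positivity
  have hbound : ∀ n : ℕ,
      (∑ k ∈ Finset.range n, ‖Q ((R ^ k) h)‖ ^ 2)
        + (∑ k ∈ Finset.Icc 1 n, ‖S' ((R ^ k) h)‖ ^ 2) ≤ ‖h‖ ^ 2 := by
    intro n
    cases n with
    | zero => simpa using sq_nonneg ‖h‖
    | succ m =>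
      have hk := (key m).2
      have hnorm : (0 : ℝ) ≤ ‖(R ^ (m + 1)) h - S' ((R ^ (m + 1)) h)‖ ^ 2 := by positivity
      linarith
  have hre : ∀ n : ℕ, (∑ k ∈ Finset.range n, ‖S' ((R ^ (k + 1)) h)‖ ^ 2)
      = ∑ k ∈ Finset.Icc 1 n, ‖S' ((R ^ k) h)‖ ^ 2 := by
    intro n
    rw [← Finset.Ico_add_one_right_eq_Icc, Finset.sum_Ico_eq_sum_range]
    exact Finset.sum_congr rfl fun i _ => by rw [Nat.add_comm]
  have hsum1 : Summable (fun k : ℕ => ‖Q ((R ^ k) h)‖ ^ 2) := by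
    apply summable_of_sum_range_le (c := ‖h‖ ^ 2) hQnn
    intro n
    have h1 := hbound n
    have h2 : (0 : ℝ) ≤ ∑ k ∈ Finset.Icc 1 n, ‖S' ((R ^ k) h)‖ ^ 2 :=
      Finset.sum_nonneg fun i _ => hSnn i
    linarith
  have hsum2 : Summable (fun k : ℕ => ‖S' ((R ^ (k + 1)) h)‖ ^ 2) := by
    apply summable_of_sum_range_le (c := ‖h‖ ^ 2) (fun k => by positivity)
    intro n
    rw [hre n]
    have h1 := hbound n
    have h2 : (0 : ℝ) ≤ ∑ k ∈ Finset.range n, ‖Q ((R ^ k) h)‖ ^ 2 :=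
      Finset.sum_nonneg fun i _ => hQnn i
    linarith
  refine ⟨?_, hsum1, hsum2, ?_⟩
  · intro m
    have h1 := hbound (m + 1)
    have h2 : (∑ k ∈ Finset.Icc 1 m, ‖S' ((R ^ k) h)‖ ^ 2)
        ≤ ∑ k ∈ Finset.Icc 1 (m + 1), ‖S' ((R ^ k) h)‖ ^ 2 :=
      Finset.sum_le_sum_of_subset_of_nonneg
        (Finset.Icc_subset_Icc_right (Nat.le_succ m)) (fun i _ _ => hSnn i)
    linarith
  · rw [← Summable.tsum_add hsum1 hsum2]
    apply Summable.tsum_le_of_sum_range_le (hsum1.add hsum2)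
    intro n
    rw [Finset.sum_add_distrib, hre n]
    exact hbound n
end

section
/- Let H be a complex Hilbert space, let T be a bounded operator on H with ‖h‖ ≤ ‖T h‖ for all h ∈ H, and let M be a closed subspace of H that is nearly T⁻¹-invariant with defect p, with defect space F orthogonal to M. Let R be the unique bounded operator on H with T ∘ R = P_{M ∩ T(H)}. Then: (a) for every h ∈ M, R h ∈ M + F; (b) for every h ∈ F, R h = 0; and consequently (c) R(M + F) ⊆ M + F, and R^m h ∈ M + F for every h ∈ M and every m ∈ ℕ. -/
/-- properties of the operator `R` with `T ∘ R = P_{M ∩ T(H)}`: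
(a) `R(M) ⊆ M + F`, (b) `R` vanishes on `F`, (c) `R(M + F) ⊆ M + F` and
`R^m h ∈ M + F` for every `h ∈ M` and `m ∈ ℕ`. -/
theorem stmt_11 {H : Type*} [NormedAddCommGroup H] [InnerProductSpace ℂ H] [CompleteSpace H]
    (T : H →L[ℂ] H) (hT : ∀ h : H, ‖h‖ ≤ ‖T h‖)
    (M F : Submodule ℂ H) (hMclosed : IsClosed (M : Set H))
    (p : ℕ) (hFdim : Module.finrank ℂ F = p) (hFM : F ≤ Mᗮ)
    (hnear : ∀ f : H, T f ∈ M → f ∈ M ⊔ F)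
    (P : H →L[ℂ] H) (hP : IsOrthoProjOn (M ⊓ LinearMap.range (T : H →ₗ[ℂ] H)) P)
    (R : H →L[ℂ] H) (hR : T.comp R = P) :
    (∀ h ∈ M, R h ∈ M ⊔ F) ∧
    (∀ h ∈ F, R h = 0) ∧
    (∀ h ∈ M ⊔ F, R h ∈ M ⊔ F) ∧
    (∀ h ∈ M, ∀ m : ℕ, (R ^ m) h ∈ M ⊔ F) := by
  have hTR : ∀ x : H, T (R x) = P x := fun x => DFunLike.congr_fun hR x
  have hall : ∀ x : H, R x ∈ M ⊔ F := by
    intro x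
    apply hnear
    rw [hTR]
    exact (hP.1 x).1
  have hb : ∀ h ∈ F, R h = 0 := by
    intro h hF
    have hperp : h ∈ (M ⊓ LinearMap.range (T : H →ₗ[ℂ] H))ᗮ :=
      Submodule.orthogonal_le inf_le_left (hFM hF)
    have hPh : P h = 0 := by
      have h1 : P h ∈ (M ⊓ LinearMap.range (T : H →ₗ[ℂ] H))ᗮ := by
        have := (M ⊓ LinearMap.range (T : H →ₗ[ℂ] H))ᗮ.sub_mem hperp (hP.2 h)
        simpa using this
      exact inner_self_eq_zero (𝕜 := ℂ).mp (h1 (P h) (hP.1 h))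
    have hle : ‖R h‖ ≤ 0 := by
      calc ‖R h‖ ≤ ‖T (R h)‖ := hT _
        _ = 0 := by rw [hTR, hPh, norm_zero]
    simpa using norm_le_zero_iff.mp hle
  refine ⟨fun h _ => hall h, hb, fun h _ => hall h, ?_⟩
  intro h hM m
  induction m with
  | zero => simpa using Submodule.mem_sup_left hM
  | succ n ih =>
    rw [pow_succ']
    exact hall _
end

section
/- Let H be a complex Hilbert space, let T be a bounded operator on H with ‖h‖ ≤ ‖T h‖ for all h ∈ H, and let M be a closed subspace of H that is nearly T⁻¹-invariant with defect p, with defect space F orthogonal to M. Let R be the unique bounded operator on H with T ∘ R = P_{M ∩ T(H)}, let Q = P_{M ⊖ (M ∩ T(H))}, and let S′ = P_F. Then for every h ∈ M: h = Q h + T R h, and for every integer m ≥ 1: R^m h = Q R^m h + T R^{m+1} h + S′ R^m h. -/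
theorem IsOrthoProjOn.apply_of_mem {H : Type*} [NormedAddCommGroup H] [InnerProductSpace ℂ H]
    {L : Submodule ℂ H} {P : H →L[ℂ] H} (hP : IsOrthoProjOn L P) {x : H} (hx : x ∈ L) :
    P x = x := by
  have h3 : x - P x ∈ L ⊓ Lᗮ := ⟨L.sub_mem hx (hP.1 x), hP.2 x⟩
  have h4 : x - P x = 0 := by
    have := (Submodule.orthogonal_disjoint L).le_bot h3
    simpa using this
  exact (sub_eq_zero.mp h4).symm

theorem IsOrthoProjOn.apply_of_mem_orthogonal {H : Type*} [NormedAddCommGroup H]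
    [InnerProductSpace ℂ H] {L : Submodule ℂ H} {P : H →L[ℂ] H} (hP : IsOrthoProjOn L P)
    {x : H} (hx : x ∈ Lᗮ) : P x = 0 := by
  have h1 : P x ∈ Lᗮ := by
    have := Lᗮ.sub_mem hx (hP.2 x)
    simpa using this
  have h3 : P x ∈ L ⊓ Lᗮ := ⟨hP.1 x, h1⟩
  have := (Submodule.orthogonal_disjoint L).le_bot h3
  simpa using this

/-- for `h ∈ M`, `h = Q h + T R h` and, for every `m ≥ 1`,
`R^m h = Q R^m h + T R^{m+1} h + S' R^m h`. -/
theorem stmt_12 {H : Type*} [NormedAddCommGroup H] [InnerProductSpace ℂ H] [CompleteSpace H]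
    (T : H →L[ℂ] H) (hT : ∀ h : H, ‖h‖ ≤ ‖T h‖)
    (M F : Submodule ℂ H) (hMclosed : IsClosed (M : Set H))
    (p : ℕ) (hFdim : Module.finrank ℂ F = p) (hFM : F ≤ Mᗮ)
    (hnear : ∀ f : H, T f ∈ M → f ∈ M ⊔ F)
    (P : H →L[ℂ] H) (hP : IsOrthoProjOn (M ⊓ LinearMap.range (T : H →ₗ[ℂ] H)) P)
    (R : H →L[ℂ] H) (hR : T.comp R = P)
    (Q : H →L[ℂ] H) (hQ : IsOrthoProjOn (M ⊓ (M ⊓ LinearMap.range (T : H →ₗ[ℂ] H))ᗮ) Q)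
    (S' : H →L[ℂ] H) (hS' : IsOrthoProjOn F S') :
    ∀ h ∈ M,
      h = Q h + T (R h) ∧
      ∀ m : ℕ, 1 ≤ m →
        (R ^ m) h = Q ((R ^ m) h) + T ((R ^ (m + 1)) h) + S' ((R ^ m) h) := by
  intro h hM
  set N : Submodule ℂ H := M ⊓ LinearMap.range (T : H →ₗ[ℂ] H) with hN
  have hTR : ∀ x, T (R x) = P x := fun x => congrFun (congrArg DFunLike.coe hR) x
  have hNM : N ≤ M := inf_le_left
  have hNQorth : N ≤ (M ⊓ Nᗮ)ᗮ :=
    le_trans (Submodule.le_orthogonal_orthogonal N) (Submodule.orthogonal_le inf_le_right)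
  have hMF : M ≤ Fᗮ :=
    le_trans (Submodule.le_orthogonal_orthogonal M) (Submodule.orthogonal_le hFM)
  have hFN : F ≤ Nᗮ := le_trans hFM (Submodule.orthogonal_le hNM)
  have hFQ : F ≤ (M ⊓ Nᗮ)ᗮ := le_trans hFM (Submodule.orthogonal_le inf_le_left)
  have key : ∀ u ∈ M, ∀ v ∈ F, u + v = Q (u + v) + T (R (u + v)) + S' (u + v) := by
    intro u hu v hv
    have hPv : P v = 0 := hP.apply_of_mem_orthogonal (hFN hv)
    have hQv : Q v = 0 := hQ.apply_of_mem_orthogonal (hFQ hv)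
    have hSv : S' v = v := hS'.apply_of_mem hv
    have hSu : S' u = 0 := hS'.apply_of_mem_orthogonal (hMF hu)
    have hQu : Q u = u - P u := by
      have h1 : u - P u ∈ M ⊓ Nᗮ := ⟨M.sub_mem hu (hNM (hP.1 u)), hP.2 u⟩
      have h2 : Q (u - P u) = u - P u := hQ.apply_of_mem h1
      have h3 : Q (P u) = 0 := hQ.apply_of_mem_orthogonal (hNQorth (hP.1 u))
      calc Q u = Q ((u - P u) + P u) := by rw [sub_add_cancel]
        _ = Q (u - P u) + Q (P u) := map_add Q _ _
        _ = u - P u := by rw [h2, h3, add_zero]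
    rw [hTR, map_add, map_add, map_add, hPv, hQv, hSv, hSu, hQu]
    abel
  constructor
  · have hk := key h hM 0 F.zero_mem
    have hSh : S' h = 0 := hS'.apply_of_mem_orthogonal (hMF hM)
    simp only [add_zero] at hk
    rw [hSh, add_zero] at hk
    exact hk
  · intro m hm
    have hmem : (R ^ m) h ∈ M ⊔ F := by
      obtain ⟨k, rfl⟩ := Nat.exists_eq_add_of_le hm
      have hpow : (R ^ (1 + k)) h = R ((R ^ k) h) := by
        rw [add_comm, pow_succ']
        rfl
      rw [hpow]
      apply hnear
      rw [hTR]
      exact hNM (hP.1 _)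
    obtain ⟨u, hu, v, hv, huv⟩ := Submodule.mem_sup.mp hmem
    have hpow2 : (R ^ (m + 1)) h = R ((R ^ m) h) := by
      rw [pow_succ']
      rfl
    rw [hpow2, ← huv]
    exact key u hu v hv
end

section
/- (Factorization Theorem, case M ⊄ M_u(H).) Let d ≥ 1, let W be an open subset of ℂ^d, and let (H, j, u, T, γ) satisfy: H is a complex Hilbert space; j is a linear map from H to functions ℂ^d → ℂ such that each j h is analytic on W, and j is injective on W (if j h vanishes identically on W then h = 0); for each w ∈ W the evaluation h ↦ (j h)(w) is a continuous linear functional on H; u : ℂ^d → ℂ is analytic on W; T is a bounded linear operator on H with (j(T h))(w) = u(w)·(j h)(w) for all h ∈ H and w ∈ W; and γ > 0 satisfies γ‖h‖ ≤ ‖T h‖ for all h ∈ H. Set Ω := { w ∈ W : |u(w)| < γ }, and assume: every function f : ℂ^d → ℂ such that for each n ∈ ℕ there exists hₙ ∈ H with f(w) = u(w)ⁿ · (j hₙ)(w) for all w ∈ Ω vanishes identically on Ω. Let M ⊆ H be a closed subspace that is nearly T⁻¹-invariant with defect p, with defect space F orthogonal to M; let (e_j)_{j=1}^{p} be an orthonormal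 basis of F and let (g_i)_{i∈I} be an orthonormal basis of M ⊖ (M ∩ T(H)), indexed by a set I. Then for every h ∈ M there exist complex numbers (c_{i,k})_{i∈I, k∈ℕ} and (b_{j,k})_{1≤j≤p, k∈ℕ} such that Σ_{i∈I} Σ_{k∈ℕ} |c_{i,k}|² + Σ_{j=1}^{p} Σ_{k∈ℕ} |b_{j,k}|² ≤ ‖h‖², and for every w ∈ Ω: (j h)(w) = Σ_{i∈I} (j g_i)(w) · ( Σ_{k=0}^{∞} c_{i,k} (u(w)/γ)^k ) + γ⁻¹ u(w) · Σ_{j=1}^{p} (j e_j)(w) · ( Σ_{k=0}^{∞} b_{j,k} (u(w)/γ)^k ), where each inner power series converges absolutely (since |u(w)| < γ and the coefficients are square-summable) and the sum over i ∈ I converges absolutely. -/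
open scoped InnerProductSpace

lemma auxA {H : Type*} [NormedAddCommGroup H] [InnerProductSpace ℂ H] {n : ℕ} {e : Fin n → H}
    (he : Orthonormal ℂ e) {x : H} (hx : x ∈ Submodule.span ℂ (Set.range e)) :
    x = ∑ j, (inner ℂ (e j) x : ℂ) • e j := by
  induction hx using Submodule.span_induction with
  | mem y hy =>
    obtain ⟨j0, rfl⟩ := hy
    simp [orthonormal_iff_ite.1 he]
  | zero => simp
  | add y z _ _ hy hz =>
    simp only [inner_add_right, add_smul, Finset.sum_add_distrib]
    rw [← hy, ← hz]
  | smul a y _ hy =>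
    simp only [inner_smul_right, mul_smul, ← Finset.smul_sum, ← hy]

lemma auxB {H : Type*} [NormedAddCommGroup H] [InnerProductSpace ℂ H] {n : ℕ} {e : Fin n → H}
    (he : Orthonormal ℂ e) (a : Fin n → ℂ) :
    ‖∑ j, a j • e j‖^2 = ∑ j, ‖a j‖^2 := by
  have h1 := he.inner_sum a a Finset.univ
  have h2 : (RCLike.re (inner ℂ (∑ j, a j • e j) (∑ j, a j • e j) : ℂ)) = ‖∑ j, a j • e j‖^2 :=
    inner_self_eq_norm_sq _
  rw [h1] at h2
  rw [← h2, map_sum]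
  refine Finset.sum_congr rfl fun j _ => ?_
  rw [RCLike.conj_mul]
  simp [← Complex.ofReal_pow]

set_option maxHeartbeats 1000000

/-- Factorization Theorem, case `M ⊄ M_u(H)`: every `h` in a nearly
`T⁻¹`-invariant subspace `M` with defect `p` of a Hilbert space of analytic functions
(realized via `J`) factors on `Ω = {|u| < γ}` as
`J h = Σ_i (J gᵢ)·qᵢ + γ⁻¹ u · Σ_j (J eⱼ)·hⱼ` with square-summable coefficient control. -/
theorem stmt_14 {d : ℕ} (hd : 1 ≤ d) (W : Set (Fin d → ℂ)) (hW : IsOpen W)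
    {H : Type*} [NormedAddCommGroup H] [InnerProductSpace ℂ H] [CompleteSpace H]
    (J : H →ₗ[ℂ] ((Fin d → ℂ) → ℂ))
    (hJ_an : ∀ h : H, AnalyticOnNhd ℂ (J h) W)
    (hJ_inj : ∀ h : H, (∀ w ∈ W, J h w = 0) → h = 0)
    (hJ_eval : ∀ w ∈ W, Continuous fun h : H => J h w)
    (u : (Fin d → ℂ) → ℂ) (hu : AnalyticOnNhd ℂ u W)
    (T : H →L[ℂ] H) (hTmul : ∀ (h : H), ∀ w ∈ W, J (T h) w = u w * J h w)
    (γ : ℝ) (hγ : 0 < γ) (hlow : ∀ h : H, γ * ‖h‖ ≤ ‖T h‖)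
    (Ω : Set (Fin d → ℂ)) (hΩ : Ω = {w ∈ W | ‖u w‖ < γ})
    (hcap : ∀ f : (Fin d → ℂ) → ℂ,
      (∀ n : ℕ, ∃ hn : H, ∀ w ∈ Ω, f w = (u w) ^ n * J hn w) → ∀ w ∈ Ω, f w = 0)
    (M F : Submodule ℂ H) (hMclosed : IsClosed (M : Set H))
    (p : ℕ) (hFdim : Module.finrank ℂ F = p) (hFM : F ≤ Mᗮ)
    (hnear : ∀ f : H, T f ∈ M → f ∈ M ⊔ F)
    (e : Fin p → H) (he_on : Orthonormal ℂ e)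
    (he_mem : ∀ j, e j ∈ F) (he_span : Submodule.span ℂ (Set.range e) = F)
    {I : Type*} (g : I → H) (hg_on : Orthonormal ℂ g)
    (hg_mem : ∀ i, g i ∈ M ⊓ (M ⊓ LinearMap.range (T : H →ₗ[ℂ] H))ᗮ)
    (hg_span : (Submodule.span ℂ (Set.range g)).topologicalClosure
      = M ⊓ (M ⊓ LinearMap.range (T : H →ₗ[ℂ] H))ᗮ) :
    ∀ h ∈ M, ∃ (c : I → ℕ → ℂ) (b : Fin p → ℕ → ℂ),
      Summable (fun ik : I × ℕ => ‖c ik.1 ik.2‖ ^ 2) ∧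
      Summable (fun jk : Fin p × ℕ => ‖b jk.1 jk.2‖ ^ 2) ∧
      (∑' ik : I × ℕ, ‖c ik.1 ik.2‖ ^ 2) + (∑' jk : Fin p × ℕ, ‖b jk.1 jk.2‖ ^ 2)
        ≤ ‖h‖ ^ 2 ∧
      ∀ w ∈ Ω,
        (∀ i : I, Summable fun k : ℕ => ‖c i k * (u w / (γ : ℂ)) ^ k‖) ∧
        (∀ j : Fin p, Summable fun k : ℕ => ‖b j k * (u w / (γ : ℂ)) ^ k‖) ∧
        Summable (fun i : I =>
          ‖J (g i) w * ∑' k : ℕ, c i k * (u w / (γ : ℂ)) ^ k‖) ∧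
        J h w = (∑' i : I, J (g i) w * ∑' k : ℕ, c i k * (u w / (γ : ℂ)) ^ k)
          + (γ : ℂ)⁻¹ * u w *
            ∑ j : Fin p, J (e j) w * ∑' k : ℕ, b j k * (u w / (γ : ℂ)) ^ k := by
  intro h hhM
  classical
  have hγC : ((γ : ℝ) : ℂ) ≠ 0 := Complex.ofReal_ne_zero.mpr hγ.ne'
  -- T has closed range
  have hTrange_closed : IsClosed ((LinearMap.range (T : H →ₗ[ℂ] H) : Submodule ℂ H) : Set H) := by
    have hbound : ∀ x : H, ‖x‖ ≤ (⟨γ⁻¹, (inv_pos.2 hγ).le⟩ : NNReal) * ‖T x‖ := by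
      intro x
      show ‖x‖ ≤ γ⁻¹ * ‖T x‖
      calc ‖x‖ = γ⁻¹ * (γ * ‖x‖) := by field_simp
        _ ≤ γ⁻¹ * ‖T x‖ := mul_le_mul_of_nonneg_left (hlow x) (inv_pos.2 hγ).le
    have hanti := T.antilipschitz_of_bound hbound
    have := hanti.isClosed_range T.uniformContinuous
    simpa [LinearMap.coe_range] using this
  set N : Submodule ℂ H := M ⊓ LinearMap.range (T : H →ₗ[ℂ] H) with hNdef
  have hNclosed : IsClosed (N : Set H) := by
    rw [hNdef, Submodule.coe_inf]
    exact hMclosed.inter hTrange_closed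
  haveI : CompleteSpace N := hNclosed.completeSpace_coe
  set G : Submodule ℂ H := M ⊓ Nᗮ with hGdef
  have hGclosed : IsClosed (G : Set H) := by
    rw [hGdef, Submodule.coe_inf]
    exact hMclosed.inter N.isClosed_orthogonal
  haveI : CompleteSpace G := hGclosed.completeSpace_coe
  have hgG : ∀ i, g i ∈ G := fun i => hg_mem i
  -- the key decomposition step
  have key : ∀ x : H, ∃ s fv : H, x ∈ M →
      s ∈ G ∧ x = s + T fv ∧ ‖x‖^2 = ‖s‖^2 + ‖T fv‖^2 ∧
      (fv - ∑ j, (inner ℂ (e j) fv : ℂ) • e j) ∈ M ∧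
      ‖fv‖^2 = ‖fv - ∑ j, (inner ℂ (e j) fv : ℂ) • e j‖^2
        + ∑ j, ‖(inner ℂ (e j) fv : ℂ)‖^2 := by
    intro x
    by_cases hx : x ∈ M
    · set t := N.orthogonalProjectionOnto x with ht
      have htN : (t : H) ∈ N := t.2
      obtain ⟨fv, hfv : T fv = (t : H)⟩ := htN.2
      refine ⟨x - t, fv, fun _ => ?_⟩
      have hsO : (x - t : H) ∈ Nᗮ := Submodule.sub_starProjection_mem_orthogonal (K := N) x
      have hsG : (x - t : H) ∈ G := ⟨M.sub_mem hx htN.1, hsO⟩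
      have hxdec : x = (x - t) + T fv := by rw [hfv]; abel
      have hinner0 : (inner ℂ ((x - t : H)) (T fv) : ℂ) = 0 := by
        rw [hfv]
        exact (Submodule.mem_orthogonal' N _).1 hsO _ htN
      have hTfM : T fv ∈ M := by rw [hfv]; exact htN.1
      obtain ⟨m', hm', φ', hφ', hsum⟩ := Submodule.mem_sup.1 (hnear fv hTfM)
      have hcoef : ∀ j, (inner ℂ (e j) fv : ℂ) = inner ℂ (e j) φ' := by
        intro j
        rw [← hsum, inner_add_right]
        have h0 : (inner ℂ m' (e j) : ℂ) = 0 :=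
          (Submodule.mem_orthogonal M _).1 (hFM (he_mem j)) m' hm'
        rw [inner_eq_zero_symm.1 h0, zero_add]
      have hφrep : φ' = ∑ j, (inner ℂ (e j) φ' : ℂ) • e j := by
        refine auxA he_on ?_
        rw [he_span]; exact hφ'
      have hfm : fv - ∑ j, (inner ℂ (e j) fv : ℂ) • e j = m' := by
        have : (∑ j, (inner ℂ (e j) fv : ℂ) • e j) = φ' := by
          rw [Finset.sum_congr rfl fun j _ => by rw [hcoef j]]
          exact hφrep.symm
        rw [this, ← hsum]
        abel
      have hφF : (∑ j, (inner ℂ (e j) fv : ℂ) • e j) ∈ F :=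
        F.sum_mem fun j _ => F.smul_mem _ (he_mem j)
      have hinner1 : (inner ℂ (fv - ∑ j, (inner ℂ (e j) fv : ℂ) • e j)
          (∑ j, (inner ℂ (e j) fv : ℂ) • e j) : ℂ) = 0 := by
        refine (Submodule.mem_orthogonal M _).1 (hFM hφF) _ ?_
        rw [hfm]; exact hm'
      refine ⟨hsG, hxdec, ?_, by rw [hfm]; exact hm', ?_⟩
      · have hpyth := norm_add_sq_eq_norm_sq_add_norm_sq_of_inner_eq_zero _ _ hinner0
        have hxn : ‖x‖ = ‖(x - ↑t) + T fv‖ := by rw [← hxdec]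
        rw [hxn, pow_two, pow_two, pow_two]
        exact hpyth
      · have hpyth := norm_add_sq_eq_norm_sq_add_norm_sq_of_inner_eq_zero _ _ hinner1
        have hfn : ‖fv‖ = ‖(fv - ∑ j, (inner ℂ (e j) fv : ℂ) • e j)
            + ∑ j, (inner ℂ (e j) fv : ℂ) • e j‖ := by
          congr 1; abel
        have h2 : ‖(fv - ∑ j, (inner ℂ (e j) fv : ℂ) • e j)
            + ∑ j, (inner ℂ (e j) fv : ℂ) • e j‖^2
            = ‖fv - ∑ j, (inner ℂ (e j) fv : ℂ) • e j‖^2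
              + ‖∑ j, (inner ℂ (e j) fv : ℂ) • e j‖^2 := by
          rw [pow_two, pow_two, pow_two]; exact hpyth
        rw [hfn, h2, auxB he_on]
    · exact ⟨0, 0, fun hx' => absurd hx' hx⟩
  choose S Fc hkey using key
  -- the recursively defined sequence
  set seq : ℕ → H := fun n =>
    Nat.rec h (fun _ x => Fc x - ∑ j, (inner ℂ (e j) (Fc x) : ℂ) • e j) n with hseqdef
  have seq_zero : seq 0 = h := rfl
  have seq_succ : ∀ n, seq (n+1)
      = Fc (seq n) - ∑ j, (inner ℂ (e j) (Fc (seq n)) : ℂ) • e j := fun n => rfl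
  set sk : ℕ → H := fun n => S (seq n) with hskdef
  set fk : ℕ → H := fun n => Fc (seq n) with hfkdef
  set φk : ℕ → H := fun n => ∑ j, (inner ℂ (e j) (fk n) : ℂ) • e j with hφkdef
  have seq_succ' : ∀ n, seq (n+1) = fk n - φk n := fun n => rfl
  have hseqM : ∀ n, seq n ∈ M := by
    intro n
    induction n with
    | zero => exact hhM
    | succ n ih => exact (hkey (seq n) ih).2.2.2.1
  have hk : ∀ n, sk n ∈ G ∧ seq n = sk n + T (fk n) ∧
      ‖seq n‖^2 = ‖sk n‖^2 + ‖T (fk n)‖^2 ∧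
      ‖fk n‖^2 = ‖seq (n+1)‖^2 + ∑ j, ‖(inner ℂ (e j) (fk n) : ℂ)‖^2 := by
    intro n
    obtain ⟨h1, h2, h3, h4, h5⟩ := hkey (seq n) (hseqM n)
    exact ⟨h1, h2, h3, by rw [seq_succ' n] at *; exact h5⟩
  set σ : ℕ → ℝ := fun n => ∑ j, ‖(inner ℂ (e j) (fk n) : ℂ)‖^2 with hσdef
  have hσ0 : ∀ n, 0 ≤ σ n := fun n => Finset.sum_nonneg fun j _ => sq_nonneg _
  have core : ∀ n, ‖sk n‖^2 + γ^2 * (‖seq (n+1)‖^2 + σ n) ≤ ‖seq n‖^2 := by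
    intro n
    obtain ⟨_, _, h3, h4⟩ := hk n
    have h5 := mul_self_le_mul_self (by positivity : (0:ℝ) ≤ γ * ‖fk n‖) (hlow (fk n))
    nlinarith [h5, h3, h4]
  set A : ℕ → ℝ := fun n => (γ^2)^n * ‖seq n‖^2 with hAdef
  have hA0 : A 0 = ‖h‖^2 := by simp [hAdef, seq_zero]
  have hAnn : ∀ n, 0 ≤ A n := fun n => by positivity
  set dS : ℕ → ℝ := fun k => (γ^2)^k * ‖sk k‖^2 with hdSdef
  set dB : ℕ → ℝ := fun k => (γ^2)^(k+1) * σ k with hdBdef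
  have hdS0 : ∀ k, 0 ≤ dS k := fun k => by positivity
  have hdB0 : ∀ k, 0 ≤ dB k := fun k => mul_nonneg (by positivity) (hσ0 k)
  have tele : ∀ n, dS n + dB n ≤ A n - A (n+1) := by
    intro n
    have hp : (0:ℝ) ≤ (γ^2)^n := by positivity
    have hps : ((γ:ℝ)^2)^(n+1) = (γ^2)^n * γ^2 := pow_succ _ _
    have := mul_le_mul_of_nonneg_left (core n) hp
    simp only [hdSdef, hdBdef, hAdef, hps]
    nlinarith [this]
  have hA_le : ∀ n, A n ≤ ‖h‖^2 := by
    intro n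
    induction n with
    | zero => rw [hA0]
    | succ n ih =>
      have := tele n
      have := hdS0 n
      have := hdB0 n
      linarith
  have hdS_le : ∀ k, dS k ≤ ‖h‖^2 := by
    intro k
    have := tele k
    have := hA_le k
    have := hAnn (k+1)
    have := hdB0 k
    linarith
  have hdB_le : ∀ k, dB k ≤ ‖h‖^2 := by
    intro k
    have := tele k
    have := hA_le k
    have := hAnn (k+1)
    have := hdS0 k
    linarith
  have hpartial : ∀ n, ∑ k ∈ Finset.range n, (dS k + dB k) ≤ ‖h‖^2 := by
    intro n
    calc ∑ k ∈ Finset.range n, (dS k + dB k)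
        ≤ ∑ k ∈ Finset.range n, (A k - A (k+1)) := Finset.sum_le_sum fun k _ => tele k
      _ = A 0 - A n := Finset.sum_range_sub' A n
      _ ≤ ‖h‖^2 := by rw [hA0]; linarith [hAnn n]
  have hsumdSB : Summable (fun k => dS k + dB k) :=
    summable_of_sum_range_le (fun k => add_nonneg (hdS0 k) (hdB0 k)) hpartial
  have hsumdS : Summable dS :=
    Summable.of_nonneg_of_le hdS0 (fun k => le_add_of_nonneg_right (hdB0 k)) hsumdSB
  have hsumdB : Summable dB :=
    Summable.of_nonneg_of_le hdB0 (fun k => le_add_of_nonneg_left (hdS0 k)) hsumdSB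
  have htot : (∑' k, dS k) + (∑' k, dB k) ≤ ‖h‖^2 := by
    rw [← Summable.tsum_add hsumdS hsumdB]
    exact Summable.tsum_le_of_sum_range_le hsumdSB hpartial
  -- norm bounds
  have hskle : ∀ k, γ^k * ‖sk k‖ ≤ ‖h‖ := by
    intro k
    refine (pow_le_pow_iff_left₀ (by positivity) (norm_nonneg h) two_ne_zero).1 ?_
    calc (γ^k * ‖sk k‖)^2 = dS k := by simp only [hdSdef]; ring
      _ ≤ ‖h‖^2 := hdS_le k
  have hseqle : ∀ k, γ^k * ‖seq k‖ ≤ ‖h‖ := by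
    intro k
    refine (pow_le_pow_iff_left₀ (by positivity) (norm_nonneg h) two_ne_zero).1 ?_
    calc (γ^k * ‖seq k‖)^2 = A k := by simp only [hAdef]; ring
      _ ≤ ‖h‖^2 := hA_le k
  have hfkle : ∀ k, γ^(k+1) * ‖fk k‖ ≤ ‖h‖ := by
    intro k
    refine (pow_le_pow_iff_left₀ (by positivity) (norm_nonneg h) two_ne_zero).1 ?_
    have h5 := mul_self_le_mul_self (by positivity : (0:ℝ) ≤ γ * ‖fk k‖) (hlow (fk k))
    have h3 := (hk k).2.2.1
    have hp : (0:ℝ) ≤ (γ^2)^k := by positivity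
    have hAk := hA_le k
    have : (γ^(k+1) * ‖fk k‖)^2 = (γ^2)^k * ((γ * ‖fk k‖) * (γ * ‖fk k‖)) := by ring
    rw [this]
    calc (γ^2)^k * ((γ * ‖fk k‖) * (γ * ‖fk k‖))
        ≤ (γ^2)^k * (‖T (fk k)‖ * ‖T (fk k)‖) := by
          exact mul_le_mul_of_nonneg_left h5 hp
      _ ≤ (γ^2)^k * ‖seq k‖^2 := by
          refine mul_le_mul_of_nonneg_left ?_ hp
          nlinarith [norm_nonneg (sk k), h3]
      _ ≤ ‖h‖^2 := hA_le k
  -- coefficient definitions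
  set c : I → ℕ → ℂ := fun i k => (γ:ℂ)^k * (inner ℂ (g i) (sk k) : ℂ) with hcdef
  set b : Fin p → ℕ → ℂ := fun j k => (γ:ℂ)^(k+1) * (inner ℂ (e j) (fk k) : ℂ) with hbdef
  have hnγC : ‖((γ:ℝ):ℂ)‖ = γ := by
    simp [Complex.norm_real, abs_of_pos hγ]
  have hcnorm : ∀ i k, ‖c i k‖^2 = (γ^2)^k * ‖(inner ℂ (g i) (sk k) : ℂ)‖^2 := by
    intro i k
    rw [hcdef]
    simp only [norm_mul, norm_pow, hnγC, mul_pow]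
    ring
  have hbnorm : ∀ j k, ‖b j k‖^2 = (γ^2)^(k+1) * ‖(inner ℂ (e j) (fk k) : ℂ)‖^2 := by
    intro j k
    rw [hbdef]
    simp only [norm_mul, norm_pow, hnγC, mul_pow]
    ring
  have hfibc : ∀ i, Summable fun k => ‖c i k‖^2 := by
    intro i
    refine Summable.of_nonneg_of_le (fun k => by positivity) (fun k => ?_) hsumdS
    rw [hcnorm]
    refine mul_le_mul_of_nonneg_left ?_ (by positivity)
    have hin : ‖(inner ℂ (g i) (sk k) : ℂ)‖ ≤ ‖sk k‖ := by
      simpa [hg_on.1 i] using norm_inner_le_norm (𝕜 := ℂ) (g i) (sk k)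
    exact pow_le_pow_left₀ (norm_nonneg _) hin 2
  have hfibb : ∀ j, Summable fun k => ‖b j k‖^2 := by
    intro j
    refine Summable.of_nonneg_of_le (fun k => by positivity) (fun k => ?_) hsumdB
    rw [hbnorm]
    refine mul_le_mul_of_nonneg_left ?_ (by positivity)
    exact Finset.single_le_sum (f := fun j' => ‖(inner ℂ (e j') (fk k) : ℂ)‖^2)
      (fun j' _ => by positivity) (Finset.mem_univ j)
  have hfinsetc : ∀ s : Finset I, ∀ k, ∑ i ∈ s, ‖c i k‖^2 ≤ dS k := by
    intro s k
    rw [Finset.sum_congr rfl fun i _ => hcnorm i k, ← Finset.mul_sum]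
    exact mul_le_mul_of_nonneg_left (hg_on.sum_inner_products_le (sk k)) (by positivity)
  have houterc : Summable fun i => ∑' k, ‖c i k‖^2 := by
    refine summable_of_sum_le (c := ∑' k, dS k) (fun i => tsum_nonneg fun k => by positivity) (fun s => ?_)
    rw [← Summable.tsum_finsetSum (fun i _ => hfibc i)]
    exact Summable.tsum_le_tsum (fun k => hfinsetc s k) (summable_sum fun i _ => hfibc i) hsumdS
  have hsumc : Summable (fun ik : I × ℕ => ‖c ik.1 ik.2‖^2) :=
    (summable_prod_of_nonneg (fun ik => by positivity)).2 ⟨hfibc, houterc⟩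
  have hsumb : Summable (fun jk : Fin p × ℕ => ‖b jk.1 jk.2‖^2) :=
    (summable_prod_of_nonneg (fun jk => by positivity)).2 ⟨hfibb, Summable.of_finite⟩
  have htsumc_le : (∑' ik : I × ℕ, ‖c ik.1 ik.2‖^2) ≤ ∑' k, dS k := by
    rw [Summable.tsum_prod hsumc]
    refine Summable.tsum_le_of_sum_le houterc fun s => ?_
    rw [← Summable.tsum_finsetSum (fun i _ => hfibc i)]
    exact Summable.tsum_le_tsum (fun k => hfinsetc s k) (summable_sum fun i _ => hfibc i) hsumdS
  have htsumb_eq : (∑' jk : Fin p × ℕ, ‖b jk.1 jk.2‖^2) = ∑' k, dB k := by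
    rw [Summable.tsum_prod hsumb, tsum_fintype, ← Summable.tsum_finsetSum (fun j _ => hfibb j)]
    refine tsum_congr fun k => ?_
    rw [Finset.sum_congr rfl fun j _ => hbnorm j k, ← Finset.mul_sum]
  refine ⟨c, b, hsumc, hsumb, ?_, ?_⟩
  · rw [htsumb_eq]
    calc (∑' ik : I × ℕ, ‖c ik.1 ik.2‖^2) + ∑' k, dB k
        ≤ (∑' k, dS k) + ∑' k, dB k := by linarith [htsumc_le]
      _ ≤ ‖h‖^2 := htot
  · -- pointwise factorization
    -- Hilbert basis of G
    have hgG' : ∀ i, g i ∈ G := hgG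
    set gG : I → G := fun i => ⟨g i, hgG' i⟩ with hgGdef
    have hgGon : Orthonormal ℂ gG := by
      rw [orthonormal_iff_ite] at hg_on ⊢
      intro i j
      exact hg_on i j
    have hmap : Submodule.map G.subtype (Submodule.span ℂ (Set.range gG))
        = Submodule.span ℂ (Set.range g) := by
      rw [Submodule.map_span]
      congr 1
      ext y
      constructor
      · rintro ⟨x, ⟨i, rfl⟩, rfl⟩
        exact ⟨i, rfl⟩
      · rintro ⟨i, rfl⟩
        exact ⟨gG i, ⟨i, rfl⟩, rfl⟩
    have hgGspan : ⊤ ≤ (Submodule.span ℂ (Set.range gG)).topologicalClosure := by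
      intro x _
      have hx : (x : H) ∈ (Submodule.span ℂ (Set.range g)).topologicalClosure := by
        rw [hg_span]
        exact x.2
      have hx2 : (x : H) ∈ closure ((Submodule.span ℂ (Set.range g) : Submodule ℂ H) : Set H) := hx
      have hx3 : (x : H) ∈ closure ((↑) '' ((Submodule.span ℂ (Set.range gG) : Submodule ℂ G) : Set G) : Set H) := by
        have himg : ((↑) '' ((Submodule.span ℂ (Set.range gG) : Submodule ℂ G) : Set G) : Set H)
            = ((Submodule.span ℂ (Set.range g) : Submodule ℂ H) : Set H) := by
          rw [← hmap, Submodule.map_coe]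
          rfl
        rw [himg]
        exact hx2
      have : x ∈ closure ((Submodule.span ℂ (Set.range gG) : Submodule ℂ G) : Set G) :=
        closure_subtype.2 hx3
      exact this
    set bG : HilbertBasis I ℂ G := HilbertBasis.mk hgGon hgGspan with hbGdef
    have hbGcoe : ⇑bG = gG := HilbertBasis.coe_mk hgGon hgGspan
    intro w hw
    rw [hΩ] at hw
    obtain ⟨hwW, hwu⟩ := hw
    set z : ℂ := u w with hzdef
    set ρ : ℝ := ‖z‖ with hρdef
    have hρ0 : 0 ≤ ρ := norm_nonneg z
    set χ : ℝ := ρ / γ with hχdef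
    have hχ0 : 0 ≤ χ := div_nonneg hρ0 hγ.le
    have hχ1 : χ < 1 := (div_lt_one hγ).2 hwu
    have hgeo : Summable fun k : ℕ => χ^k := summable_geometric_of_lt_one hχ0 hχ1
    -- the evaluation functional
    set L : H →ₗ[ℂ] ℂ :=
      { toFun := fun x => J x w
        map_add' := fun a b₀ => by
          show J (a + b₀) w = J a w + J b₀ w
          rw [map_add]; rfl
        map_smul' := fun m x => by
          show J (m • x) w = m • (J x w)
          rw [map_smul]; rfl } with hLdef
    set E : H →L[ℂ] ℂ := { toLinearMap := L, cont := hJ_eval w hwW } with hEdef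
    have hE : ∀ x : H, E x = J x w := fun x => rfl
    have hzn : ‖z‖ = ρ := rfl
    have hzγ : ‖z / (γ:ℂ)‖ = χ := by
      rw [norm_div, hnγC, hzn]
    have hmul : ∀ (kk : ℕ) (a B : ℝ), 0 ≤ a → γ^kk * a ≤ B → ρ^kk * a ≤ B * χ^kk := by
      intro kk a B ha hb
      have hχγ : χ^kk * γ^kk = ρ^kk := by
        rw [hχdef, ← mul_pow, div_mul_cancel₀ _ hγ.ne']
      calc ρ^kk * a = χ^kk * (γ^kk * a) := by rw [← hχγ]; ring
        _ ≤ χ^kk * B := mul_le_mul_of_nonneg_left hb (by positivity)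
        _ = B * χ^kk := mul_comm _ _
    -- coefficient bounds
    have hcbd : ∀ i k, ‖c i k‖ ≤ ‖h‖ := by
      intro i k
      rw [hcdef]
      simp only [norm_mul, norm_pow, hnγC]
      have hin : ‖(inner ℂ (g i) (sk k) : ℂ)‖ ≤ ‖sk k‖ := by
        simpa [hg_on.1 i] using norm_inner_le_norm (𝕜 := ℂ) (g i) (sk k)
      calc γ^k * ‖(inner ℂ (g i) (sk k) : ℂ)‖ ≤ γ^k * ‖sk k‖ :=
            mul_le_mul_of_nonneg_left hin (by positivity)
        _ ≤ ‖h‖ := hskle k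
    have hbbd : ∀ (j : Fin p) k, ‖b j k‖ ≤ ‖h‖ := by
      intro j k
      rw [hbdef]
      simp only [norm_mul, norm_pow, hnγC]
      have hin : ‖(inner ℂ (e j) (fk k) : ℂ)‖ ≤ ‖fk k‖ := by
        simpa [he_on.1 j] using norm_inner_le_norm (𝕜 := ℂ) (e j) (fk k)
      calc γ^(k+1) * ‖(inner ℂ (e j) (fk k) : ℂ)‖ ≤ γ^(k+1) * ‖fk k‖ :=
            mul_le_mul_of_nonneg_left hin (by positivity)
        _ ≤ ‖h‖ := hfkle k
    have hsumc1 : ∀ i, Summable fun k : ℕ => ‖c i k * (z / (γ:ℂ))^k‖ := by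
      intro i
      refine Summable.of_nonneg_of_le (fun k => norm_nonneg _) (fun k => ?_)
        (hgeo.mul_left ‖h‖)
      rw [norm_mul, norm_pow, hzγ]
      exact mul_le_mul_of_nonneg_right (hcbd i k) (by positivity)
    have hsumb1 : ∀ j : Fin p, Summable fun k : ℕ => ‖b j k * (z / (γ:ℂ))^k‖ := by
      intro j
      refine Summable.of_nonneg_of_le (fun k => norm_nonneg _) (fun k => ?_)
        (hgeo.mul_left ‖h‖)
      rw [norm_mul, norm_pow, hzγ]
      exact mul_le_mul_of_nonneg_right (hbbd j k) (by positivity)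
    -- the vector v
    have hsumv : Summable fun k : ℕ => z^k • sk k := by
      refine Summable.of_norm (Summable.of_nonneg_of_le (fun k => norm_nonneg _)
        (fun k => ?_) (hgeo.mul_left ‖h‖))
      rw [norm_smul, norm_pow, hzn]
      exact hmul k _ _ (norm_nonneg _) (hskle k)
    set vH : H := ∑' k : ℕ, z^k • sk k with hvdef
    have hvG : vH ∈ G := by
      refine hGclosed.mem_of_tendsto hsumv.hasSum.tendsto_sum_nat
        (Filter.Eventually.of_forall fun n => ?_)
      exact Submodule.sum_mem G fun k _ => G.smul_mem _ ((hk k).1)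
    have hq : ∀ i, (∑' k : ℕ, c i k * (z / (γ:ℂ))^k) = (inner ℂ (g i) vH : ℂ) := by
      intro i
      have h1 : ∀ k : ℕ, c i k * (z / (γ:ℂ))^k = (inner ℂ (g i) (z^k • sk k) : ℂ) := by
        intro k
        rw [inner_smul_right, hcdef, div_pow]
        field_simp
      rw [tsum_congr h1]
      have h2 := (innerSL ℂ (g i)).map_tsum hsumv
      exact h2.symm
    -- expansion of v in the basis
    have hbasis : HasSum (fun i => (inner ℂ (g i) vH : ℂ) * J (g i) w) (J vH w) := by
      have hrepr := bG.hasSum_repr ⟨vH, hvG⟩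
      have h2 := hrepr.mapL (E.comp G.subtypeL)
      have h3 : (E.comp G.subtypeL) (⟨vH, hvG⟩ : G) = J vH w := rfl
      rw [h3] at h2
      have h2' : HasSum (fun i => (E.comp G.subtypeL)
          ((bG.repr (⟨vH, hvG⟩ : G)) i • bG i)) (J vH w) := h2
      have h6 : ∀ i, (E.comp G.subtypeL) ((bG.repr (⟨vH, hvG⟩ : G)) i • bG i)
          = (inner ℂ (g i) vH : ℂ) * J (g i) w := by
        intro i
        rw [map_smul]
        have h4 : (bG.repr (⟨vH, hvG⟩ : G)) i = (inner ℂ (bG i) (⟨vH, hvG⟩ : G) : ℂ) :=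
          bG.repr_apply_apply _ i
        rw [h4, hbGcoe]
        rfl
      exact (funext h6 : _) ▸ h2'
    have hgtsum : (∑' i : I, J (g i) w * ∑' k : ℕ, c i k * (z / (γ:ℂ))^k) = J vH w := by
      have h1 : (fun i => J (g i) w * ∑' k : ℕ, c i k * (z / (γ:ℂ))^k)
          = fun i => (inner ℂ (g i) vH : ℂ) * J (g i) w := by
        funext i
        rw [hq i, mul_comm]
      rw [h1]
      exact hbasis.tsum_eq
    have hEv : J vH w = ∑' k : ℕ, z^k * J (sk k) w := by
      have h1 := E.map_tsum hsumv
      calc J vH w = E vH := rfl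
        _ = ∑' k : ℕ, E (z^k • sk k) := h1
        _ = ∑' k : ℕ, z^k * J (sk k) w := by
            refine tsum_congr fun k => ?_
            rw [map_smul]
            rfl
    -- summability of the series pieces
    have hsum_s : Summable fun k : ℕ => z^k * J (sk k) w := by
      refine Summable.of_norm (Summable.of_nonneg_of_le (fun k => norm_nonneg _)
        (fun k => ?_) (hgeo.mul_left (‖E‖ * ‖h‖)))
      rw [norm_mul, norm_pow, hzn]
      calc ρ^k * ‖J (sk k) w‖ ≤ ρ^k * (‖E‖ * ‖sk k‖) := by
            refine mul_le_mul_of_nonneg_left ?_ (by positivity)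
            rw [← hE]
            exact E.le_opNorm _
        _ = ‖E‖ * (ρ^k * ‖sk k‖) := by ring
        _ ≤ ‖E‖ * (‖h‖ * χ^k) := by
            refine mul_le_mul_of_nonneg_left ?_ (norm_nonneg _)
            exact hmul k _ _ (norm_nonneg _) (hskle k)
        _ = ‖E‖ * ‖h‖ * χ^k := by ring
    have hfk_le' : ∀ k, ρ^(k+1) * ‖fk k‖ ≤ ‖h‖ * χ^(k+1) :=
      fun k => hmul (k+1) _ _ (norm_nonneg _) (hfkle k)
    have hseq_le' : ∀ k, ρ^k * ‖seq k‖ ≤ ‖h‖ * χ^k :=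
      fun k => hmul k _ _ (norm_nonneg _) (hseqle k)
    have hφeq : ∀ k, φk k = fk k - seq (k+1) := by
      intro k
      rw [seq_succ' k]
      abel
    have hφ_le' : ∀ k, ρ^(k+1) * ‖φk k‖ ≤ 2 * ‖h‖ * χ^(k+1) := by
      intro k
      have h1 : ‖φk k‖ ≤ ‖fk k‖ + ‖seq (k+1)‖ := by
        rw [hφeq k]
        exact norm_sub_le _ _
      have h2 := hfk_le' k
      have h3 := hseq_le' (k+1)
      have hp : (0:ℝ) ≤ ρ^(k+1) := by positivity
      have h4 : ρ^(k+1)*(‖fk k‖+‖seq (k+1)‖)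
          = ρ^(k+1)*‖fk k‖ + ρ^(k+1)*‖seq (k+1)‖ := by ring
      have h5 := mul_le_mul_of_nonneg_left h1 hp
      linarith
    have hsum_φ : Summable fun k : ℕ => z^(k+1) * J (φk k) w := by
      refine Summable.of_norm (Summable.of_nonneg_of_le (fun k => norm_nonneg _)
        (fun k => ?_) (hgeo.mul_left (‖E‖ * (2 * ‖h‖ * χ))))
      rw [norm_mul, norm_pow, hzn]
      calc ρ^(k+1) * ‖J (φk k) w‖ ≤ ρ^(k+1) * (‖E‖ * ‖φk k‖) := by
            refine mul_le_mul_of_nonneg_left ?_ (by positivity)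
            rw [← hE]
            exact E.le_opNorm _
        _ = ‖E‖ * (ρ^(k+1) * ‖φk k‖) := by ring
        _ ≤ ‖E‖ * (2 * ‖h‖ * χ^(k+1)) := by
            refine mul_le_mul_of_nonneg_left ?_ (norm_nonneg _)
            exact hφ_le' k
        _ = ‖E‖ * (2 * ‖h‖ * χ) * χ^k := by ring
    have hFsummable : Summable fun k : ℕ => z^k * J (sk k) w + z^(k+1) * J (φk k) w :=
      hsum_s.add hsum_φ
    -- telescoping partial sums
    have partial_eq : ∀ n : ℕ,
        (∑ k ∈ Finset.range n, (z^k * J (sk k) w + z^(k+1) * J (φk k) w))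
          + z^n * J (seq n) w = J h w := by
      intro n
      induction n with
      | zero => simp [seq_zero]
      | succ n ih =>
        rw [Finset.sum_range_succ, ← ih]
        have e1 : J (seq n) w = J (sk n) w + z * J (fk n) w := by
          have h2 := (hk n).2.1
          calc J (seq n) w = E (seq n) := rfl
            _ = E (sk n) + E (T (fk n)) := by rw [h2, map_add]
            _ = J (sk n) w + J (T (fk n)) w := rfl
            _ = J (sk n) w + z * J (fk n) w := by rw [hTmul (fk n) w hwW]
        have e2 : J (fk n) w = J (seq (n+1)) w + J (φk n) w := by
          have h2 : fk n = seq (n+1) + φk n := by rw [seq_succ' n]; abel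
          calc J (fk n) w = E (fk n) := rfl
            _ = E (seq (n+1)) + E (φk n) := by rw [h2, map_add]
            _ = J (seq (n+1)) w + J (φk n) w := rfl
        have e3 : (z^n * J (sk n) w + z^(n+1) * J (φk n) w)
            + z^(n+1) * J (seq (n+1)) w = z^n * J (seq n) w := by
          rw [e1, e2]
          ring
        linear_combination e3
    have hrem : Filter.Tendsto (fun n : ℕ => z^n * J (seq n) w)
        Filter.atTop (nhds 0) := by
      refine squeeze_zero_norm (fun n => ?_)
        (by simpa using (tendsto_pow_atTop_nhds_zero_of_lt_one hχ0 hχ1).const_mul (‖E‖ * ‖h‖))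
      rw [norm_mul, norm_pow, hzn]
      calc ρ^n * ‖J (seq n) w‖ ≤ ρ^n * (‖E‖ * ‖seq n‖) := by
            refine mul_le_mul_of_nonneg_left ?_ (by positivity)
            rw [← hE]
            exact E.le_opNorm _
        _ = ‖E‖ * (ρ^n * ‖seq n‖) := by ring
        _ ≤ ‖E‖ * (‖h‖ * χ^n) := by
            refine mul_le_mul_of_nonneg_left ?_ (norm_nonneg _)
            exact hseq_le' n
        _ = ‖E‖ * ‖h‖ * χ^n := by ring
    have main_eq : (∑' k : ℕ, (z^k * J (sk k) w + z^(k+1) * J (φk k) w)) = J h w := by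
      have h1 := hFsummable.hasSum.tendsto_sum_nat
      have h2 := h1.add hrem
      rw [add_zero] at h2
      have h3 : (fun n : ℕ => (∑ k ∈ Finset.range n,
          (z^k * J (sk k) w + z^(k+1) * J (φk k) w)) + z^n * J (seq n) w)
          = fun _ => J h w := funext partial_eq
      rw [h3] at h2
      exact tendsto_nhds_unique h2 tendsto_const_nhds
    -- the e-part
    have hsum_ef : ∀ j : Fin p, Summable fun k : ℕ => z^k * (inner ℂ (e j) (fk k) : ℂ) := by
      intro j
      refine Summable.of_norm (Summable.of_nonneg_of_le (fun k => norm_nonneg _)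
        (fun k => ?_) (hgeo.mul_left (‖h‖ / γ)))
      rw [norm_mul, norm_pow, hzn]
      have hin : ‖(inner ℂ (e j) (fk k) : ℂ)‖ ≤ ‖fk k‖ := by
        simpa [he_on.1 j] using norm_inner_le_norm (𝕜 := ℂ) (e j) (fk k)
      have hfg : γ^k * ‖fk k‖ ≤ ‖h‖ / γ := by
        rw [le_div_iff₀ hγ]
        calc γ^k * ‖fk k‖ * γ = γ^(k+1) * ‖fk k‖ := by ring
          _ ≤ ‖h‖ := hfkle k
      calc ρ^k * ‖(inner ℂ (e j) (fk k) : ℂ)‖ ≤ ρ^k * ‖fk k‖ :=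
            mul_le_mul_of_nonneg_left hin (by positivity)
        _ ≤ (‖h‖ / γ) * χ^k := hmul k _ _ (norm_nonneg _) hfg
    have hbser : ∀ j : Fin p, (∑' k : ℕ, b j k * (z / (γ:ℂ))^k)
        = (γ:ℂ) * ∑' k : ℕ, z^k * (inner ℂ (e j) (fk k) : ℂ) := by
      intro j
      rw [← tsum_mul_left]
      refine tsum_congr fun k => ?_
      rw [hbdef, div_pow]
      field_simp
      ring
    have hφsum : ∀ k, J (φk k) w = ∑ j, (inner ℂ (e j) (fk k) : ℂ) * J (e j) w := by
      intro k
      calc J (φk k) w = E (∑ j, (inner ℂ (e j) (fk k) : ℂ) • e j) := rfl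
        _ = ∑ j, (inner ℂ (e j) (fk k) : ℂ) * E (e j) := by
            rw [map_sum]
            exact Finset.sum_congr rfl fun j _ => by rw [map_smul]; rfl
        _ = ∑ j, (inner ℂ (e j) (fk k) : ℂ) * J (e j) w := rfl
    have hsumj : ∀ j : Fin p, Summable fun k : ℕ =>
        z^(k+1) * ((inner ℂ (e j) (fk k) : ℂ) * J (e j) w) := by
      intro j
      have h1 : ∀ k : ℕ, z^(k+1) * ((inner ℂ (e j) (fk k) : ℂ) * J (e j) w)
          = (z * J (e j) w) * (z^k * (inner ℂ (e j) (fk k) : ℂ)) := fun k => by ring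
      rw [funext h1]
      exact (hsum_ef j).mul_left _
    have hsecond : (∑' k : ℕ, z^(k+1) * J (φk k) w)
        = (γ:ℂ)⁻¹ * z * ∑ j, J (e j) w * ∑' k : ℕ, b j k * (z / (γ:ℂ))^k := by
      calc (∑' k : ℕ, z^(k+1) * J (φk k) w)
          = ∑' k : ℕ, ∑ j, z^(k+1) * ((inner ℂ (e j) (fk k) : ℂ) * J (e j) w) := by
            refine tsum_congr fun k => ?_
            rw [hφsum k, Finset.mul_sum]
        _ = ∑ j, ∑' k : ℕ, z^(k+1) * ((inner ℂ (e j) (fk k) : ℂ) * J (e j) w) :=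
            Summable.tsum_finsetSum fun j _ => hsumj j
        _ = ∑ j, (z * J (e j) w) * ∑' k : ℕ, z^k * (inner ℂ (e j) (fk k) : ℂ) := by
            refine Finset.sum_congr rfl fun j _ => ?_
            rw [← tsum_mul_left]
            refine tsum_congr fun k => ?_
            ring
        _ = (γ:ℂ)⁻¹ * z * ∑ j, J (e j) w * ∑' k : ℕ, b j k * (z / (γ:ℂ))^k := by
            rw [Finset.mul_sum]
            refine Finset.sum_congr rfl fun j _ => ?_
            rw [hbser j]
            field_simp
    -- summability over i
    set kw : H := (InnerProductSpace.toDual ℂ H).symm E with hkwdef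
    have hkw : ∀ x : H, (inner ℂ kw x : ℂ) = J x w := fun x =>
      InnerProductSpace.toDual_symm_apply
    have hSg : Summable fun i => ‖J (g i) w‖^2 := by
      have h1 := hg_on.inner_products_summable kw
      refine h1.congr fun i => ?_
      rw [← hkw (g i), norm_inner_symm]
    have hSq : Summable fun i => ‖(inner ℂ (g i) vH : ℂ)‖^2 :=
      hg_on.inner_products_summable vH
    have hsum3 : Summable fun i : I =>
        ‖J (g i) w * ∑' k : ℕ, c i k * (z / (γ:ℂ))^k‖ := by
      have h1 : (fun i : I => ‖J (g i) w * ∑' k : ℕ, c i k * (z / (γ:ℂ))^k‖)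
          = fun i => ‖J (g i) w * (inner ℂ (g i) vH : ℂ)‖ := funext fun i => by rw [hq i]
      rw [h1]
      refine Summable.of_nonneg_of_le (fun i => norm_nonneg _) (fun i => ?_)
        ((hSg.add hSq).mul_left (1/2 : ℝ))
      rw [norm_mul]
      nlinarith [sq_nonneg (‖J (g i) w‖ - ‖(inner ℂ (g i) vH : ℂ)‖),
        norm_nonneg (J (g i) w), norm_nonneg ((inner ℂ (g i) vH : ℂ))]
    refine ⟨hsumc1, hsumb1, hsum3, ?_⟩
    rw [hgtsum, hEv, ← hsecond, ← Summable.tsum_add hsum_s hsum_φ, main_eq]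
end

section
/- (Factorization Theorem, case M ⊆ M_u(H).) Let d ≥ 1, let W be an open subset of ℂ^d, and let (H, j, u, T, γ) satisfy: H is a complex Hilbert space; j is a linear map from H to functions ℂ^d → ℂ such that each j h is analytic on W, and j is injective on W (if j h vanishes identically on W then h = 0); for each w ∈ W the evaluation h ↦ (j h)(w) is a continuous linear functional on H; u : ℂ^d → ℂ is analytic on W; T is a bounded linear operator on H with (j(T h))(w) = u(w)·(j h)(w) for all h ∈ H and w ∈ W; and γ > 0 satisfies γ‖h‖ ≤ ‖T h‖ for all h ∈ H. Set Ω := { w ∈ W : |u(w)| < γ }, and assume: every function f : ℂ^d → ℂ such that for each n ∈ ℕ there exists hₙ ∈ H with f(w) = u(w)ⁿ · (j hₙ)(w) for all w ∈ Ω vanishes identically on Ω. Let M ⊆ H be a closed subspace that is nearly T⁻¹-invariant with defect p, with defect space F orthogonal to M, and assume M ⊆ T(H); let (e_j)_{j=1}^{p} be an orthonormal basis of F. Then for every h ∈ M there exist complex numbers (b_{j,k})_{1≤j≤p, k∈ℕ} such that Σ_{j=1}^{p} Σ_{k∈ℕ} |b_{j,k}|² ≤ ‖h‖², and for every w ∈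 Ω: (j h)(w) = γ⁻¹ u(w) · Σ_{j=1}^{p} (j e_j)(w) · ( Σ_{k=0}^{∞} b_{j,k} (u(w)/γ)^k ), where each inner power series converges absolutely. -/
/-- Factorization Theorem, case `M ⊆ M_u(H)`: every `h` in a nearly
`T⁻¹`-invariant subspace `M ⊆ T(H)` with defect `p` of a Hilbert space of analytic functions
(realized via `J`) factors on `Ω = {|u| < γ}` as `J h = γ⁻¹ u · Σ_j (J eⱼ)·hⱼ`
with square-summable coefficient control. -/
theorem stmt_15 {d : ℕ} (hd : 1 ≤ d) (W : Set (Fin d → ℂ)) (hW : IsOpen W)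
    {H : Type*} [NormedAddCommGroup H] [InnerProductSpace ℂ H] [CompleteSpace H]
    (J : H →ₗ[ℂ] ((Fin d → ℂ) → ℂ))
    (hJ_an : ∀ h : H, AnalyticOnNhd ℂ (J h) W)
    (hJ_inj : ∀ h : H, (∀ w ∈ W, J h w = 0) → h = 0)
    (hJ_eval : ∀ w ∈ W, Continuous fun h : H => J h w)
    (u : (Fin d → ℂ) → ℂ) (hu : AnalyticOnNhd ℂ u W)
    (T : H →L[ℂ] H) (hTmul : ∀ (h : H), ∀ w ∈ W, J (T h) w = u w * J h w)
    (γ : ℝ) (hγ : 0 < γ) (hlow : ∀ h : H, γ * ‖h‖ ≤ ‖T h‖)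
    (Ω : Set (Fin d → ℂ)) (hΩ : Ω = {w ∈ W | ‖u w‖ < γ})
    (hcap : ∀ f : (Fin d → ℂ) → ℂ,
      (∀ n : ℕ, ∃ hn : H, ∀ w ∈ Ω, f w = (u w) ^ n * J hn w) → ∀ w ∈ Ω, f w = 0)
    (M F : Submodule ℂ H) (hMclosed : IsClosed (M : Set H))
    (p : ℕ) (hFdim : Module.finrank ℂ F = p) (hFM : F ≤ Mᗮ)
    (hnear : ∀ f : H, T f ∈ M → f ∈ M ⊔ F)
    (hMsub : M ≤ LinearMap.range (T : H →ₗ[ℂ] H))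
    (e : Fin p → H) (he_on : Orthonormal ℂ e)
    (he_mem : ∀ j, e j ∈ F) (he_span : Submodule.span ℂ (Set.range e) = F) :
    ∀ h ∈ M, ∃ b : Fin p → ℕ → ℂ,
      Summable (fun jk : Fin p × ℕ => ‖b jk.1 jk.2‖ ^ 2) ∧
      (∑' jk : Fin p × ℕ, ‖b jk.1 jk.2‖ ^ 2) ≤ ‖h‖ ^ 2 ∧
      ∀ w ∈ Ω,
        (∀ j : Fin p, Summable fun k : ℕ => ‖b j k * (u w / (γ : ℂ)) ^ k‖) ∧
        J h w = (γ : ℂ)⁻¹ * u w *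
          ∑ j : Fin p, J (e j) w * ∑' k : ℕ, b j k * (u w / (γ : ℂ)) ^ k := by
  intro h hM
  classical
  -- Step construction
  have step : ∀ m : H, m ∈ M → ∃ m' g : H, m' ∈ M ∧ g ∈ F ∧ T (m' + g) = m := by
    intro m hm
    obtain ⟨f, hf⟩ := hMsub hm
    have hfmem : f ∈ M ⊔ F := hnear f (show (T : H →ₗ[ℂ] H) f ∈ M by rw [hf]; exact hm)
    obtain ⟨m', hm', g, hg, hfg⟩ := Submodule.mem_sup.mp hfmem
    exact ⟨m', g, hm', hg, by rw [hfg]; exact hf⟩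
  choose next gp hnextM hgpF hTeq using step
  -- The sequence
  let seq : ℕ → {x : H // x ∈ M} := fun n =>
    Nat.rec ⟨h, hM⟩ (fun _ prev => ⟨next prev.1 prev.2, hnextM prev.1 prev.2⟩) n
  have hseq0 : (seq 0).1 = h := rfl
  have hgF : ∀ n, gp (seq n).1 (seq n).2 ∈ F := fun n => hgpF _ _
  have hTs : ∀ n, T ((seq (n + 1)).1 + gp (seq n).1 (seq n).2) = (seq n).1 := fun n => hTeq _ _
  -- coefficients
  have hdecomp : ∀ n, ∃ cn : Fin p → ℂ, ∑ i, cn i • e i = gp (seq n).1 (seq n).2 := by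
    intro n
    have : gp (seq n).1 (seq n).2 ∈ Submodule.span ℂ (Set.range e) := by
      rw [he_span]; exact hgF n
    exact (Submodule.mem_span_range_iff_exists_fun ℂ).mp this
  choose c hc using hdecomp
  -- norm of a combination of the orthonormal family
  have norm_sq_sum : ∀ l : Fin p → ℂ, ‖∑ i, l i • e i‖ ^ 2 = ∑ i, ‖l i‖ ^ 2 := by
    intro l
    have h1 := he_on.inner_sum l l Finset.univ
    have h2 : RCLike.re (inner ℂ (∑ i, l i • e i) (∑ i, l i • e i) : ℂ) = ‖∑ i, l i • e i‖ ^ 2 :=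
      inner_self_eq_norm_sq _
    rw [h1] at h2
    rw [← h2, map_sum]
    refine Finset.sum_congr rfl fun i _ => ?_
    rw [RCLike.conj_mul]
    simp [← Complex.ofReal_pow]
  have hgnorm : ∀ n, ‖gp (seq n).1 (seq n).2‖ ^ 2 = ∑ j, ‖c n j‖ ^ 2 := by
    intro n; rw [← hc n]; exact norm_sq_sum (c n)
  -- orthogonality
  have horth : ∀ n, ‖(seq (n + 1)).1 + gp (seq n).1 (seq n).2‖ ^ 2
      = ‖(seq (n + 1)).1‖ ^ 2 + ‖gp (seq n).1 (seq n).2‖ ^ 2 := by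
    intro n
    have hinner : (inner ℂ ((seq (n + 1)).1) (gp (seq n).1 (seq n).2) : ℂ) = 0 :=
      (Submodule.mem_orthogonal M _).mp (hFM (hgF n)) _ (seq (n + 1)).2
    have := norm_add_sq_eq_norm_sq_add_norm_sq_of_inner_eq_zero _ _ hinner
    simpa [pow_two] using this
  -- key inequality
  have hkey : ∀ n, γ ^ 2 * (‖(seq (n + 1)).1‖ ^ 2 + ‖gp (seq n).1 (seq n).2‖ ^ 2)
      ≤ ‖(seq n).1‖ ^ 2 := by
    intro n
    have hl := hlow ((seq (n + 1)).1 + gp (seq n).1 (seq n).2)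
    rw [hTs n] at hl
    have hsq : (γ * ‖(seq (n + 1)).1 + gp (seq n).1 (seq n).2‖) ^ 2 ≤ ‖(seq n).1‖ ^ 2 :=
      pow_le_pow_left₀ (mul_nonneg hγ.le (norm_nonneg _)) hl 2
    calc γ ^ 2 * (‖(seq (n + 1)).1‖ ^ 2 + ‖gp (seq n).1 (seq n).2‖ ^ 2)
        = (γ * ‖(seq (n + 1)).1 + gp (seq n).1 (seq n).2‖) ^ 2 := by rw [mul_pow, horth n]
      _ ≤ ‖(seq n).1‖ ^ 2 := hsq
  -- gamma-step norm bound
  have hstep : ∀ n, γ * ‖(seq (n + 1)).1‖ ≤ ‖(seq n).1‖ := by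
    intro n
    have h1 : (γ * ‖(seq (n + 1)).1‖) ^ 2 ≤ ‖(seq n).1‖ ^ 2 := by
      have := hkey n
      nlinarith [sq_nonneg ‖gp (seq n).1 (seq n).2‖, sq_nonneg γ]
    have := Real.sqrt_le_sqrt h1
    rwa [Real.sqrt_sq (mul_nonneg hγ.le (norm_nonneg _)), Real.sqrt_sq (norm_nonneg _)] at this
  have hNnorm : ∀ n, γ ^ n * ‖(seq n).1‖ ≤ ‖h‖ := by
    intro n
    induction n with
    | zero => simp [hseq0]
    | succ n ih =>
      calc γ ^ (n + 1) * ‖(seq (n + 1)).1‖ = γ ^ n * (γ * ‖(seq (n + 1)).1‖) := by ring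
        _ ≤ γ ^ n * ‖(seq n).1‖ := by
            exact mul_le_mul_of_nonneg_left (hstep n) (pow_nonneg hγ.le n)
        _ ≤ ‖h‖ := ih
  -- evaluation bound
  have heval : ∀ w ∈ W, ∃ C : ℝ, 0 ≤ C ∧ ∀ x : H, ‖J x w‖ ≤ C * ‖x‖ := by
    intro w hw
    let L : H →ₗ[ℂ] ℂ :=
      { toFun := fun x => J x w
        map_add' := fun x y => by simp [map_add]
        map_smul' := fun r x => by simp [map_smul] }
    obtain ⟨C, hC0, hC⟩ := SemilinearMapClass.bound_of_continuous L (hJ_eval w hw)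
    exact ⟨C, hC0.le, hC⟩
  -- the coefficients b
  set b : Fin p → ℕ → ℂ := fun j k => (γ : ℂ) ^ (k + 1) * c k j with hbdef
  have hγC : ((γ : ℝ) : ℂ) ≠ 0 := Complex.ofReal_ne_zero.mpr hγ.ne'
  have hbnorm : ∀ j k, ‖b j k‖ = γ ^ (k + 1) * ‖c k j‖ := by
    intro j k
    simp only [hbdef]
    rw [norm_mul, norm_pow, Complex.norm_real, Real.norm_eq_abs, abs_of_pos hγ]
  set B : ℕ → ℝ := fun k => ∑ j, ‖b j k‖ ^ 2 with hBdef
  have hB0 : ∀ k, 0 ≤ B k := fun k => Finset.sum_nonneg fun j _ => sq_nonneg _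
  have hBg : ∀ k, B k = γ ^ (2 * (k + 1)) * ‖gp (seq k).1 (seq k).2‖ ^ 2 := by
    intro k
    simp only [hBdef]
    rw [hgnorm k, Finset.mul_sum]
    refine Finset.sum_congr rfl fun j _ => ?_
    rw [hbnorm j k]; ring
  have hpsum : ∀ N, (∑ k ∈ Finset.range N, B k) + γ ^ (2 * N) * ‖(seq N).1‖ ^ 2 ≤ ‖h‖ ^ 2 := by
    intro N
    induction N with
    | zero => simp [hseq0]
    | succ N ih =>
      rw [Finset.sum_range_succ]
      have hmul := mul_le_mul_of_nonneg_left (hkey N) (pow_nonneg hγ.le (2 * N))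
      have h2 : B N + γ ^ (2 * (N + 1)) * ‖(seq (N + 1)).1‖ ^ 2
          = γ ^ (2 * N) * (γ ^ 2 * (‖(seq (N + 1)).1‖ ^ 2 + ‖gp (seq N).1 (seq N).2‖ ^ 2)) := by
        rw [hBg N]; ring
      linarith
  have hsum_le : ∀ N, ∑ k ∈ Finset.range N, B k ≤ ‖h‖ ^ 2 := by
    intro N
    have := hpsum N
    nlinarith [pow_nonneg hγ.le (2 * N), sq_nonneg ‖(seq N).1‖]
  have hBsummable : Summable B := summable_of_sum_range_le hB0 hsum_le
  have hBtsum : ∑' k, B k ≤ ‖h‖ ^ 2 := Summable.tsum_le_of_sum_range_le hBsummable hsum_le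
  have hbBk : ∀ j k, ‖b j k‖ ^ 2 ≤ B k := fun j k =>
    Finset.single_le_sum (f := fun j => ‖b j k‖ ^ 2) (fun i _ => sq_nonneg _) (Finset.mem_univ j)
  have hbh : ∀ j k, ‖b j k‖ ≤ ‖h‖ := by
    intro j k
    have h1 : ‖b j k‖ ^ 2 ≤ ‖h‖ ^ 2 :=
      le_trans (hbBk j k) (le_trans (Summable.le_tsum hBsummable k fun i _ => hB0 i) hBtsum)
    have h2 := Real.sqrt_le_sqrt h1
    rwa [Real.sqrt_sq (norm_nonneg _), Real.sqrt_sq (norm_nonneg _)] at h2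
  have hcb : ∀ j k, γ ^ (k + 1) * ‖c k j‖ ≤ ‖h‖ := by
    intro j k; rw [← hbnorm j k]; exact hbh j k
  have hfib : ∀ j, Summable fun k => ‖b j k‖ ^ 2 := fun j =>
    Summable.of_nonneg_of_le (fun k => sq_nonneg _) (fun k => hbBk j k) hBsummable
  have hProd : Summable (fun jk : Fin p × ℕ => ‖b jk.1 jk.2‖ ^ 2) := by
    refine (summable_prod_of_nonneg ?_).mpr ⟨fun j => hfib j, Summable.of_finite⟩
    intro jk; positivity
  -- the recurrence for J
  have hrecJ : ∀ n, ∀ w ∈ W,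
      J ((seq n).1) w = u w * (J ((seq (n + 1)).1) w + ∑ j, c n j * J (e j) w) := by
    intro n w hw
    have h1 := hTmul ((seq (n + 1)).1 + gp (seq n).1 (seq n).2) w hw
    rw [hTs n] at h1
    rw [h1, map_add]
    simp only [Pi.add_apply]
    congr 2
    rw [← hc n, map_sum]
    simp [map_smul]
  refine ⟨b, hProd, ?_, ?_⟩
  · -- tsum bound
    rw [Summable.tsum_prod hProd, tsum_fintype, ← Summable.tsum_finsetSum (fun j _ => hfib j)]
    exact hBtsum
  · -- the factorization at each point of Ω
    intro w hw
    rw [hΩ] at hw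
    obtain ⟨hwW, habs⟩ := hw
    set r : ℝ := ‖u w‖ / γ with hrdef
    have hr0 : 0 ≤ r := div_nonneg (norm_nonneg _) hγ.le
    have hr1 : r < 1 := by
      rw [hrdef, div_lt_one hγ]; exact habs
    have hq : ‖u w / (γ : ℂ)‖ = r := by
      rw [norm_div, Complex.norm_real, Real.norm_eq_abs, abs_of_pos hγ, hrdef]
    constructor
    · intro j
      refine Summable.of_nonneg_of_le (fun k => norm_nonneg _) (fun k => ?_)
        ((summable_geometric_of_lt_one hr0 hr1).mul_left ‖h‖)
      rw [norm_mul, norm_pow, hq]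
      exact mul_le_mul_of_nonneg_right (hbh j k) (pow_nonneg hr0 k)
    · -- series identity
      have hcbound : ∀ k j, ‖c k j‖ * ‖u w‖ ^ k ≤ γ⁻¹ * ‖h‖ * r ^ k := by
        intro k j
        have h1 := hcb j k
        have h2 : ‖c k j‖ ≤ γ⁻¹ * ‖h‖ * (γ⁻¹) ^ k := by
          have h3 : ‖c k j‖ ≤ ‖h‖ / γ ^ (k + 1) := (le_div_iff₀' (by positivity)).mpr h1
          calc ‖c k j‖ ≤ ‖h‖ / γ ^ (k + 1) := h3
            _ = γ⁻¹ * ‖h‖ * (γ⁻¹) ^ k := by rw [inv_pow, div_eq_mul_inv, pow_succ, mul_inv]; ring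
        calc ‖c k j‖ * ‖u w‖ ^ k ≤ (γ⁻¹ * ‖h‖ * (γ⁻¹) ^ k) * ‖u w‖ ^ k :=
              mul_le_mul_of_nonneg_right h2 (pow_nonneg (norm_nonneg _) k)
          _ = γ⁻¹ * ‖h‖ * r ^ k := by rw [hrdef, div_pow, div_eq_mul_inv, ← inv_pow]; ring
      have hSj : ∀ j, Summable fun k => c k j * u w ^ k := by
        intro j
        refine Summable.of_norm_bounded
          ((summable_geometric_of_lt_one hr0 hr1).mul_left (γ⁻¹ * ‖h‖)) ?_
        intro k; rw [norm_mul, norm_pow]; exact hcbound k j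
      set S : ℕ → ℂ := fun k => ∑ j, (u w * J (e j) w) * (c k j * u w ^ k) with hSdef
      have hSsum : Summable S := summable_sum fun j _ => (hSj j).mul_left _
      -- partial sum identity
      have halg : ∀ (N : ℕ) (X : ℂ),
          u w ^ N * (u w * (X + ∑ j, c N j * J (e j) w)) = S N + u w ^ (N + 1) * X := by
        intro N X
        have h1 : S N = ∑ j, u w ^ N * (u w * (c N j * J (e j) w)) := by
          simp only [hSdef]
          exact Finset.sum_congr rfl fun j _ => by ring
        rw [h1, ← Finset.mul_sum, ← Finset.mul_sum]
        ring
      have hParts : ∀ N, J h w = (∑ k ∈ Finset.range N, S k) + u w ^ N * J ((seq N).1) w := by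
        intro N
        induction N with
        | zero => simp [hseq0]
        | succ N ih =>
          rw [ih, Finset.sum_range_succ, hrecJ N w hwW, halg N]
          ring
      -- the tail goes to zero
      obtain ⟨C, hC0, hC⟩ := heval w hwW
      have htail : Filter.Tendsto (fun N => u w ^ N * J ((seq N).1) w)
          Filter.atTop (nhds 0) := by
        refine squeeze_zero_norm (a := fun N => C * ‖h‖ * r ^ N) (fun N => ?_) ?_
        · rw [norm_mul, norm_pow]
          calc ‖u w‖ ^ N * ‖J ((seq N).1) w‖
              ≤ ‖u w‖ ^ N * (C * ‖(seq N).1‖) :=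
                mul_le_mul_of_nonneg_left (hC _) (pow_nonneg (norm_nonneg _) N)
            _ ≤ C * ‖h‖ * r ^ N := by
                rw [hrdef, div_pow, ← mul_div_assoc, le_div_iff₀ (by positivity : (0:ℝ) < γ ^ N)]
                nlinarith [mul_le_mul_of_nonneg_left (hNnorm N)
                  (mul_nonneg hC0 (pow_nonneg (norm_nonneg (u w)) N))]
        · simpa using (tendsto_pow_atTop_nhds_zero_of_lt_one hr0 hr1).const_mul (C * ‖h‖)
      have hpartial : Filter.Tendsto (fun N => ∑ k ∈ Finset.range N, S k)
          Filter.atTop (nhds (J h w)) := by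
        have heq : ∀ N, ∑ k ∈ Finset.range N, S k = J h w - u w ^ N * J ((seq N).1) w :=
          fun N => eq_sub_of_add_eq (hParts N).symm
        simp only [heq]
        simpa using Filter.Tendsto.sub (tendsto_const_nhds (x := J h w)) htail
      have hJh : J h w = ∑' k, S k :=
        tendsto_nhds_unique hpartial hSsum.hasSum.tendsto_sum_nat
      -- final algebra
      have hbq : ∀ j, ∑' k, b j k * (u w / (γ : ℂ)) ^ k = (γ : ℂ) * ∑' k, c k j * u w ^ k := by
        intro j
        rw [← (hSj j).tsum_mul_left ((γ : ℝ) : ℂ)]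
        congr 1; funext k
        simp only [hbdef]
        rw [div_pow]
        field_simp
        ring
      rw [hJh]
      calc ∑' k, S k = ∑ j, ∑' k, (u w * J (e j) w) * (c k j * u w ^ k) :=
            Summable.tsum_finsetSum fun j _ => (hSj j).mul_left _
        _ = ∑ j, (u w * J (e j) w) * ∑' k, c k j * u w ^ k :=
            Finset.sum_congr rfl fun j _ => (hSj j).tsum_mul_left _
        _ = (γ : ℂ)⁻¹ * u w * ∑ j, J (e j) w * ∑' k, b j k * (u w / (γ : ℂ)) ^ k := by
            rw [Finset.mul_sum]
            refine Finset.sum_congr rfl fun j _ => ?_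
            rw [hbq j]
            field_simp
end

section
/- Let α ∈ [-1, 0) be a real number and let G be a natural number with G ≥ 1. Define weights w : ℕ → ℝ by w(n) = G^α for n < G and w(n) = (n+1)^α for n ≥ G. Then for every n ∈ ℕ, w(n+1) ≥ (1 − 1/(G+1))^{−α} · w(n), and consequently, for every normed space K and every sequence a : ℕ → K, one has Σₙ w(n+1)·‖a(n)‖² ≥ (1 − 1/(G+1))^{−α} · Σₙ w(n)·‖a(n)‖² (as sums in [0,∞]). In other words, the lower bound of the forward shift on the weighted sequence space with weights w (which models multiplication by a finite Blaschke product B on the Dirichlet-type space D_α with the modified norm ‖·‖₁) is at least γ₁ := (1 − 1/(G+1))^{−α/2}. -/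
lemma aux_ratio (α x y : ℝ) (hx : 0 < x) (hy : 0 < y) :
    (x / y) ^ (-α) * x ^ α = y ^ α := by
  rw [Real.rpow_neg (div_nonneg hx.le hy.le), Real.div_rpow hx.le hy.le]
  have h1 : x ^ α ≠ 0 := (Real.rpow_pos_of_pos hx α).ne'
  have h2 : y ^ α ≠ 0 := (Real.rpow_pos_of_pos hy α).ne'
  field_simp

/-- the weight `w(n) = Gᵅ` for `n < G`, `w(n) = (n+1)ᵅ` for `n ≥ G`
(with `α ∈ [-1,0)`) satisfies `w(n+1) ≥ (1 - 1/(G+1))^{-α} · w(n)`, and hence the forward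
shift on the corresponding weighted sequence space has lower bound at least
`γ₁ = (1 - 1/(G+1))^{-α/2}`. -/
theorem stmt_16 (α : ℝ) (hα₁ : -1 ≤ α) (hα₂ : α < 0) (G : ℕ) (hG : 1 ≤ G)
    (w : ℕ → ℝ) (hw : ∀ n : ℕ, w n = if n < G then (G : ℝ) ^ α else ((n : ℝ) + 1) ^ α)
    (K : Type*) [NormedAddCommGroup K] (a : ℕ → K) :
    (∀ n : ℕ, (1 - 1 / ((G : ℝ) + 1)) ^ (-α) * w n ≤ w (n + 1)) ∧
    ENNReal.ofReal ((1 - 1 / ((G : ℝ) + 1)) ^ (-α)) *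
        (∑' n : ℕ, ENNReal.ofReal (w n * ‖a n‖ ^ 2))
      ≤ ∑' n : ℕ, ENNReal.ofReal (w (n + 1) * ‖a n‖ ^ 2) := by
  have hGpos : (0 : ℝ) < G := by exact_mod_cast hG
  have hbase : (1 : ℝ) - 1 / ((G : ℝ) + 1) = (G : ℝ) / ((G : ℝ) + 1) := by
    field_simp
    ring
  have hαneg : 0 ≤ -α := by linarith
  have hpt : ∀ n : ℕ, (1 - 1 / ((G : ℝ) + 1)) ^ (-α) * w n ≤ w (n + 1) := by
    intro n
    rw [hw n, hw (n + 1), hbase]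
    by_cases h1 : n + 1 < G
    · rw [if_pos (by omega), if_pos h1]
      have hc1 : ((G : ℝ) / ((G : ℝ) + 1)) ^ (-α) ≤ 1 :=
        Real.rpow_le_one (by positivity)
          (by rw [div_le_one (by positivity)]; linarith) hαneg
      nlinarith [Real.rpow_pos_of_pos hGpos α]
    · rw [if_neg h1]
      by_cases h2 : n < G
      · rw [if_pos h2]
        have hn : n + 1 = G := by omega
        have : ((n : ℝ) + 1) = (G : ℝ) := by exact_mod_cast congrArg Nat.cast hn
        push_cast
        rw [this]
        exact (aux_ratio α (G : ℝ) ((G : ℝ) + 1) hGpos (by positivity)).le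
      · rw [if_neg h2]
        push_cast
        have hx : (0 : ℝ) < (n : ℝ) + 1 := by positivity
        have hy : (0 : ℝ) < (n : ℝ) + 1 + 1 := by positivity
        have hle : ((G : ℝ) / ((G : ℝ) + 1)) ^ (-α)
            ≤ (((n : ℝ) + 1) / ((n : ℝ) + 1 + 1)) ^ (-α) := by
          apply Real.rpow_le_rpow (by positivity) _ hαneg
          rw [div_le_div_iff₀ (by positivity) (by positivity)]
          have : (G : ℝ) ≤ (n : ℝ) := by exact_mod_cast Nat.le_of_not_lt h2
          nlinarith
        calc ((G : ℝ) / ((G : ℝ) + 1)) ^ (-α) * ((n : ℝ) + 1) ^ α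
            ≤ (((n : ℝ) + 1) / ((n : ℝ) + 1 + 1)) ^ (-α) * ((n : ℝ) + 1) ^ α := by
              apply mul_le_mul_of_nonneg_right hle (Real.rpow_pos_of_pos hx α).le
          _ = ((n : ℝ) + 1 + 1) ^ α := aux_ratio α _ _ hx hy
  refine ⟨hpt, ?_⟩
  have hpt' := hpt
  rw [hbase]
  simp only [hbase] at hpt'
  rw [← ENNReal.tsum_mul_left]
  apply ENNReal.tsum_le_tsum
  intro n
  rw [← ENNReal.ofReal_mul (by positivity), ← mul_assoc]
  exact ENNReal.ofReal_le_ofReal (mul_le_mul_of_nonneg_right (hpt' n) (by positivity))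
end

section
/- Let α ∈ [0,1] be a real number, let K be a nonzero finite-dimensional complex Hilbert space, let W_α be the Hilbert space of sequences f : ℕ → K with ‖f‖²_α := Σₙ (n+1)^α ‖f(n)‖²_K < ∞, and let T be the forward shift on W_α, (T f)(0) = 0 and (T f)(n+1) = f(n), which is bounded and satisfies ‖T f‖_α ≥ ‖f‖_α. Let M be a closed subspace of W_α that is nearly T⁻¹-invariant with defect p, with defect space F orthogonal to M, and assume M is not contained in T(W_α). Let (e_j)_{j=1}^{p} be an orthonormal basis of F, and let (f_i)_{i=1}^{r} be an orthonormal basis of the (finite-dimensional) subspace M ⊖ (M ∩ T(W_α)). Then for every f ∈ M there exist complex numbers (c_{i,k})_{1≤i≤r, k∈ℕ} and (d_{j,k})_{1≤j≤p, k∈ℕ} such that Σ_{i=1}^{r} Σ_{k∈ℕ} |c_{i,k}|² + Σ_{j=1}^{p} Σ_{k∈ℕ} |d_{j,k}|² ≤ ‖f‖²_α, and for every n ∈ ℕ: f(n) = Σ_{i=1}^{r} Σ_{k=0}^{n} c_{i,k} · f_i(n−k) + Σ_{j=1}^{p} Σ_{k=0}^{n−1} d_{j,k} · e_j(n−1−k)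 (equality in K, empty sums being zero). -/
open scoped InnerProductSpace

lemma aux_on_norm {E : Type*} [NormedAddCommGroup E] [InnerProductSpace ℂ E]
    {n : ℕ} {v : Fin n → E} (hv : Orthonormal ℂ v) (l : Fin n → ℂ) :
    ‖∑ i, l i • v i‖ ^ 2 = ∑ i, ‖l i‖ ^ 2 := by
  have h := hv.inner_sum l l Finset.univ
  have h2 : (RCLike.re ⟪∑ i, l i • v i, ∑ i, l i • v i⟫_ℂ : ℝ) = ‖∑ i, l i • v i‖ ^ 2 :=
    inner_self_eq_norm_sq _
  rw [h] at h2
  rw [← h2, map_sum]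
  congr 1; ext i
  rw [RCLike.conj_mul]
  rw [← RCLike.ofReal_pow, RCLike.ofReal_re]

/-- coefficient factorization for nearly `T⁻¹`-invariant subspaces with defect
`p` of the weighted sequence space `W_α` (the coefficient model of the Dirichlet-type space
`D_α`, `α ∈ [0,1]`), case `M ⊄ T(W_α)`.  The space `W_α` is presented abstractly as a Hilbert
space `Wα` with an injective coordinate map `coord : Wα →ₗ (ℕ → K)` realizing the weighted
`ℓ²`-norm, on which `T` acts as the forward shift. -/
theorem stmt_17 (α : ℝ) (hα₀ : 0 ≤ α) (hα₁ : α ≤ 1)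
    {K : Type*} [NormedAddCommGroup K] [InnerProductSpace ℂ K]
    [FiniteDimensional ℂ K] [Nontrivial K]
    {Wα : Type*} [NormedAddCommGroup Wα] [InnerProductSpace ℂ Wα] [CompleteSpace Wα]
    (coord : Wα →ₗ[ℂ] (ℕ → K))
    (hinj : Function.Injective coord)
    (hsum : ∀ f : Wα, Summable fun n : ℕ => ((n : ℝ) + 1) ^ α * ‖coord f n‖ ^ 2)
    (hnorm : ∀ f : Wα, ‖f‖ ^ 2 = ∑' n : ℕ, ((n : ℝ) + 1) ^ α * ‖coord f n‖ ^ 2)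
    (hsurj : ∀ g : ℕ → K, Summable (fun n : ℕ => ((n : ℝ) + 1) ^ α * ‖g n‖ ^ 2) →
      ∃ f : Wα, coord f = g)
    (T : Wα →L[ℂ] Wα)
    (hT0 : ∀ f : Wα, coord (T f) 0 = 0)
    (hTn : ∀ (f : Wα) (n : ℕ), coord (T f) (n + 1) = coord f n)
    (hTlow : ∀ f : Wα, ‖f‖ ≤ ‖T f‖)
    (M F : Submodule ℂ Wα) (hMclosed : IsClosed (M : Set Wα))
    (p : ℕ) (hFdim : Module.finrank ℂ F = p) (hFM : F ≤ Mᗮ)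
    (hnear : ∀ f : Wα, T f ∈ M → f ∈ M ⊔ F)
    (hMnot : ¬ M ≤ LinearMap.range (T : Wα →ₗ[ℂ] Wα))
    (e : Fin p → Wα) (he_on : Orthonormal ℂ e)
    (he_mem : ∀ j, e j ∈ F) (he_span : Submodule.span ℂ (Set.range e) = F)
    (r : ℕ) (fb : Fin r → Wα) (hfb_on : Orthonormal ℂ fb)
    (hfb_mem : ∀ i, fb i ∈ M ⊓ (M ⊓ LinearMap.range (T : Wα →ₗ[ℂ] Wα))ᗮ)
    (hfb_span : Submodule.span ℂ (Set.range fb) = M ⊓ (M ⊓ LinearMap.range (T : Wα →ₗ[ℂ] Wα))ᗮ) :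
    ∀ f ∈ M, ∃ (c : Fin r → ℕ → ℂ) (d : Fin p → ℕ → ℂ),
      Summable (fun ik : Fin r × ℕ => ‖c ik.1 ik.2‖ ^ 2) ∧
      Summable (fun jk : Fin p × ℕ => ‖d jk.1 jk.2‖ ^ 2) ∧
      (∑' ik : Fin r × ℕ, ‖c ik.1 ik.2‖ ^ 2) + (∑' jk : Fin p × ℕ, ‖d jk.1 jk.2‖ ^ 2)
        ≤ ‖f‖ ^ 2 ∧
      ∀ n : ℕ, coord f n
        = (∑ i : Fin r, ∑ k ∈ Finset.range (n + 1), c i k • coord (fb i) (n - k))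
          + ∑ j : Fin p, ∑ k ∈ Finset.range n, d j k • coord (e j) (n - 1 - k) := by
  intro f hf
  -- T is antilipschitz with constant 1, hence has closed range
  have hanti : AntilipschitzWith 1 T := by
    refine AntilipschitzWith.of_le_mul_dist fun x y => ?_
    simpa [dist_eq_norm, ← map_sub] using hTlow (x - y)
  have hTr : IsClosed ((LinearMap.range (T : Wα →ₗ[ℂ] Wα) : Submodule ℂ Wα) : Set Wα) := by
    have : IsClosed (Set.range (T : Wα → Wα)) := hanti.isClosed_range T.uniformContinuous
    simpa [LinearMap.coe_range] using this
  set N : Submodule ℂ Wα := M ⊓ LinearMap.range (T : Wα →ₗ[ℂ] Wα) with hN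
  have hNclosed : IsClosed (N : Set Wα) := by
    rw [hN, Submodule.coe_inf]
    exact hMclosed.inter hTr
  haveI : CompleteSpace N := hNclosed.completeSpace_coe
  haveI : FiniteDimensional ℂ F := by
    rw [← he_span]; exact FiniteDimensional.span_of_finite ℂ (Set.finite_range e)
  -- key step lemma
  have key : ∀ m : Wα, m ∈ M → ∃ (c : Fin r → ℂ) (d : Fin p → ℂ) (m' : Wα), m' ∈ M ∧
      m = (∑ i, c i • fb i) + T (m' + ∑ j, d j • e j) ∧
      (∑ i, ‖c i‖ ^ 2) + (∑ j, ‖d j‖ ^ 2) + ‖m'‖ ^ 2 ≤ ‖m‖ ^ 2 := by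
    intro m hm
    set g : Wα := (N.orthogonalProjectionOnto m : Wα) with hg
    have hgN : g ∈ N := (N.orthogonalProjectionOnto m).2
    have hf0o : m - g ∈ Nᗮ := N.sub_starProjection_mem_orthogonal m
    have hf0M : m - g ∈ M := M.sub_mem hm hgN.1
    have hf0span : m - g ∈ Submodule.span ℂ (Set.range fb) := by
      rw [hfb_span]; exact ⟨hf0M, hf0o⟩
    obtain ⟨c, hc⟩ := (Submodule.mem_span_range_iff_exists_fun ℂ).mp hf0span
    obtain ⟨h, hh⟩ : ∃ h, T h = g := hgN.2
    have hhMF : h ∈ M ⊔ F := hnear h (by rw [hh]; exact hgN.1)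
    obtain ⟨a, ha, b, hb, hab⟩ := Submodule.mem_sup.mp hhMF
    have haF : a ∈ Fᗮ := by
      intro x hx
      have hxM : x ∈ Mᗮ := hFM hx
      have : ⟪a, x⟫_ℂ = 0 := (Submodule.mem_orthogonal M x).mp hxM a ha
      exact inner_eq_zero_symm.mpr this
    obtain ⟨d, hd⟩ := (Submodule.mem_span_range_iff_exists_fun ℂ).mp
      (by rw [he_span]; exact hb : b ∈ Submodule.span ℂ (Set.range e))
    refine ⟨c, d, a, ha, ?_, ?_⟩
    · rw [hd, hab, hh, hc]
      abel
    · -- norm inequality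
      have hcnorm : ‖m - g‖ ^ 2 = ∑ i, ‖c i‖ ^ 2 := by rw [← hc, aux_on_norm hfb_on]
      have hdnorm : ‖b‖ ^ 2 = ∑ j, ‖d j‖ ^ 2 := by rw [← hd, aux_on_norm he_on]
      have hab_inner : ⟪a, b⟫_ℂ = 0 := (Submodule.mem_orthogonal M b).mp (hFM hb) a ha
      have hh_norm : ‖h‖ ^ 2 = ‖a‖ ^ 2 + ‖b‖ ^ 2 := by
        rw [← hab]
        simpa only [← pow_two] using norm_add_sq_eq_norm_sq_add_norm_sq_of_inner_eq_zero a b hab_inner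
      have hmg_inner : ⟪m - g, g⟫_ℂ = 0 :=
        inner_eq_zero_symm.mpr ((Submodule.mem_orthogonal N (m - g)).mp hf0o g hgN)
      have hm_norm : ‖m‖ ^ 2 = ‖m - g‖ ^ 2 + ‖g‖ ^ 2 := by
        have := norm_add_sq_eq_norm_sq_add_norm_sq_of_inner_eq_zero (m - g) g hmg_inner
        simpa only [sub_add_cancel, ← pow_two] using this
      have hhg : ‖h‖ ≤ ‖g‖ := by rw [← hh]; exact hTlow h
      have hhg2 : ‖h‖ ^ 2 ≤ ‖g‖ ^ 2 := by
        exact pow_le_pow_left₀ (norm_nonneg h) hhg 2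
      rw [← hcnorm, ← hdnorm, hm_norm]
      linarith only [hh_norm, hhg2]
  classical
  choose cc dd mm hmmM hrep hstep using key
  let stepf : {x : Wα // x ∈ M} → {x : Wα // x ∈ M} := fun x => ⟨mm x.1 x.2, hmmM x.1 x.2⟩
  let seq : ℕ → {x : Wα // x ∈ M} := fun k => stepf^[k] ⟨f, hf⟩
  have hseq0 : ((seq 0 : {x : Wα // x ∈ M}) : Wα) = f := rfl
  have hseqsucc : ∀ k, seq (k + 1) = stepf (seq k) := fun k =>
    Function.iterate_succ_apply' _ _ _
  set c : Fin r → ℕ → ℂ := fun i k => cc (seq k).1 (seq k).2 i with hcdef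
  set d : Fin p → ℕ → ℂ := fun j k => dd (seq k).1 (seq k).2 j with hddef
  have hrepk : ∀ k, ((seq k : Wα)) =
      (∑ i, c i k • fb i) + T ((seq (k + 1) : Wα) + ∑ j, d j k • e j) := by
    intro k
    rw [hseqsucc k]
    exact hrep (seq k).1 (seq k).2
  have hstepk : ∀ k, (∑ i, ‖c i k‖ ^ 2) + (∑ j, ‖d j k‖ ^ 2) + ‖(seq (k + 1) : Wα)‖ ^ 2
      ≤ ‖(seq k : Wα)‖ ^ 2 := by
    intro k
    rw [hseqsucc k]
    exact hstep (seq k).1 (seq k).2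
  set a : ℕ → ℝ := fun k => (∑ i, ‖c i k‖ ^ 2) + (∑ j, ‖d j k‖ ^ 2) with hadef
  have ha_nonneg : ∀ k, 0 ≤ a k := fun k =>
    add_nonneg (Finset.sum_nonneg fun _ _ => sq_nonneg _)
      (Finset.sum_nonneg fun _ _ => sq_nonneg _)
  have hpartial : ∀ Nn : ℕ, (∑ k ∈ Finset.range Nn, a k) + ‖(seq Nn : Wα)‖ ^ 2 ≤ ‖f‖ ^ 2 := by
    intro Nn
    induction Nn with
    | zero => simp [hseq0]
    | succ n ih =>
      rw [Finset.sum_range_succ]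
      have h1 := hstepk n
      simp only [hadef] at ih ⊢
      linarith only [ih, h1]
  have hpartial' : ∀ Nn, ∑ k ∈ Finset.range Nn, a k ≤ ‖f‖ ^ 2 := fun Nn =>
    le_trans (le_add_of_nonneg_right (sq_nonneg _)) (hpartial Nn)
  have hsummable_a : Summable a := summable_of_sum_range_le ha_nonneg hpartial'
  have htsum_a : ∑' k, a k ≤ ‖f‖ ^ 2 := Summable.tsum_le_of_sum_range_le hsummable_a hpartial'
  have hA : ∀ i : Fin r, Summable fun k => ‖c i k‖ ^ 2 := by
    intro i
    refine Summable.of_nonneg_of_le (fun k => sq_nonneg _) (fun k => ?_) hsummable_a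
    calc ‖c i k‖ ^ 2 ≤ ∑ i', ‖c i' k‖ ^ 2 :=
          Finset.single_le_sum (f := fun i' => ‖c i' k‖ ^ 2) (fun _ _ => sq_nonneg _)
            (Finset.mem_univ i)
      _ ≤ a k := le_add_of_nonneg_right (Finset.sum_nonneg fun _ _ => sq_nonneg _)
  have hB : ∀ j : Fin p, Summable fun k => ‖d j k‖ ^ 2 := by
    intro j
    refine Summable.of_nonneg_of_le (fun k => sq_nonneg _) (fun k => ?_) hsummable_a
    calc ‖d j k‖ ^ 2 ≤ ∑ j', ‖d j' k‖ ^ 2 :=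
          Finset.single_le_sum (f := fun j' => ‖d j' k‖ ^ 2) (fun _ _ => sq_nonneg _)
            (Finset.mem_univ j)
      _ ≤ a k := le_add_of_nonneg_left (Finset.sum_nonneg fun _ _ => sq_nonneg _)
  have hCsum : Summable fun ik : Fin r × ℕ => ‖c ik.1 ik.2‖ ^ 2 := by
    refine (summable_prod_of_nonneg fun _ => sq_nonneg _).mpr ⟨fun i => hA i, ?_⟩
    exact Summable.of_finite
  have hDsum : Summable fun jk : Fin p × ℕ => ‖d jk.1 jk.2‖ ^ 2 := by
    refine (summable_prod_of_nonneg fun _ => sq_nonneg _).mpr ⟨fun j => hB j, ?_⟩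
    exact Summable.of_finite
  have htsumC : (∑' ik : Fin r × ℕ, ‖c ik.1 ik.2‖ ^ 2) = ∑' k, ∑ i, ‖c i k‖ ^ 2 := by
    rw [Summable.tsum_prod' hCsum fun i => hA i]
    rw [tsum_fintype]
    exact (Summable.tsum_finsetSum fun i _ => hA i).symm
  have htsumD : (∑' jk : Fin p × ℕ, ‖d jk.1 jk.2‖ ^ 2) = ∑' k, ∑ j, ‖d j k‖ ^ 2 := by
    rw [Summable.tsum_prod' hDsum fun j => hB j]
    rw [tsum_fintype]
    exact (Summable.tsum_finsetSum fun j _ => hB j).symm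
  have coordid : ∀ n k, coord ((seq k : Wα)) n =
      (∑ i, ∑ t ∈ Finset.range (n + 1), c i (k + t) • coord (fb i) (n - t))
      + ∑ j, ∑ t ∈ Finset.range n, d j (k + t) • coord (e j) (n - 1 - t) := by
    intro n
    induction n with
    | zero =>
      intro k
      have h0 := congrArg (fun x => coord x 0) (hrepk k)
      simp only [map_add, map_sum, map_smul, Pi.add_apply, Finset.sum_apply,
        Pi.smul_apply, hT0] at h0
      simpa [Finset.sum_range_one] using h0
    | succ n ih =>
      intro k
      have h1 := congrArg (fun x => coord x (n + 1)) (hrepk k)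
      simp only [map_add, map_sum, map_smul, Pi.add_apply, Finset.sum_apply,
        Pi.smul_apply, hTn] at h1
      have e1 : ∀ i : Fin r, ∑ t ∈ Finset.range (n + 1 + 1), c i (k + t) • coord (fb i) (n + 1 - t)
          = (∑ t ∈ Finset.range (n + 1), c i (k + 1 + t) • coord (fb i) (n - t))
            + c i k • coord (fb i) (n + 1) := by
        intro i
        rw [Finset.sum_range_succ']
        congr 1
        refine Finset.sum_congr rfl fun t _ => ?_
        rw [show k + (t + 1) = k + 1 + t by omega, show n + 1 - (t + 1) = n - t by omega]
      have e2 : ∀ j : Fin p, ∑ t ∈ Finset.range (n + 1), d j (k + t) • coord (e j) (n - t)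
          = (∑ t ∈ Finset.range n, d j (k + 1 + t) • coord (e j) (n - 1 - t))
            + d j k • coord (e j) n := by
        intro j
        rw [Finset.sum_range_succ']
        congr 1
        refine Finset.sum_congr rfl fun t _ => ?_
        rw [show k + (t + 1) = k + 1 + t by omega, show n - (t + 1) = n - 1 - t by omega]
      rw [h1, ih (k + 1)]
      simp only [show n + 1 - 1 = n from rfl, Nat.succ_sub_succ]
      rw [Finset.sum_congr rfl fun i _ => e1 i, Finset.sum_congr rfl fun j _ => e2 j,
        Finset.sum_add_distrib, Finset.sum_add_distrib]
      abel
  refine ⟨c, d, hCsum, hDsum, ?_, ?_⟩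
  · have hsumA : Summable fun k => ∑ i, ‖c i k‖ ^ 2 := summable_sum fun i _ => hA i
    have hsumB : Summable fun k => ∑ j, ‖d j k‖ ^ 2 := summable_sum fun j _ => hB j
    calc (∑' ik : Fin r × ℕ, ‖c ik.1 ik.2‖ ^ 2) + (∑' jk : Fin p × ℕ, ‖d jk.1 jk.2‖ ^ 2)
        = (∑' k, ∑ i, ‖c i k‖ ^ 2) + (∑' k, ∑ j, ‖d j k‖ ^ 2) := by rw [htsumC, htsumD]
      _ = ∑' k, a k := (Summable.tsum_add hsumA hsumB).symm
      _ ≤ ‖f‖ ^ 2 := htsum_a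
  · intro n
    have h := coordid n 0
    rw [hseq0] at h
    simpa using h
end

section
/- Let α ∈ [0,1] be a real number, let K be a nonzero finite-dimensional complex Hilbert space, let W_α be the Hilbert space of sequences f : ℕ → K with ‖f‖²_α := Σₙ (n+1)^α ‖f(n)‖²_K < ∞, and let T be the forward shift on W_α, (T f)(0) = 0 and (T f)(n+1) = f(n). Let M be a closed subspace of W_α that is nearly T⁻¹-invariant with defect p, with defect space F orthogonal to M, and assume M is not contained in T(W_α). Let (e_j)_{j=1}^{p} be an orthonormal basis of F and (f_i)_{i=1}^{r} an orthonormal basis of M ⊖ (M ∩ T(W_α)). Then there exists a linear subspace N of ℓ²(ℕ, ℂʳ × ℂᵖ), invariant under the backward shift (c,d) ↦ ((c,d) composed with n ↦ n+1), such that: (1) M equals the set of all f ∈ W_α for which there exists (c,d) ∈ N with f(n) = Σ_{i=1}^{r} Σ_{k=0}^{n} c(k)_i · f_i(n−k) + Σ_{j=1}^{p} Σ_{k=0}^{n−1} d(k)_j · e_j(n−1−k) for all n ∈ ℕ; and (2) for every f ∈ M the pair (c,d) ∈ N can be chosen so that Σ_{k∈ℕ} (‖c(k)‖² + ‖d(k)‖²)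 ≤ ‖f‖²_α. -/
open scoped ComplexInnerProductSpace ENNReal

set_option maxHeartbeats 1000000 in
/-- description of nearly `T⁻¹`-invariant subspaces with defect `p` of the
weighted sequence space `W_α` (the coefficient model of the Dirichlet-type space `D_α`,
`α ∈ [0,1]`), case `M ⊄ T(W_α)`: there is a backward-shift invariant linear subspace `N` of
`ℓ²(ℕ, ℂʳ × ℂᵖ)` parametrizing `M`, with norm control. -/
theorem stmt_18 (α : ℝ) (hα₀ : 0 ≤ α) (hα₁ : α ≤ 1)
    {K : Type*} [NormedAddCommGroup K] [InnerProductSpace ℂ K]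
    [FiniteDimensional ℂ K] [Nontrivial K]
    {Wα : Type*} [NormedAddCommGroup Wα] [InnerProductSpace ℂ Wα] [CompleteSpace Wα]
    (coord : Wα →ₗ[ℂ] (ℕ → K))
    (hinj : Function.Injective coord)
    (hsum : ∀ f : Wα, Summable fun n : ℕ => ((n : ℝ) + 1) ^ α * ‖coord f n‖ ^ 2)
    (hnorm : ∀ f : Wα, ‖f‖ ^ 2 = ∑' n : ℕ, ((n : ℝ) + 1) ^ α * ‖coord f n‖ ^ 2)
    (hsurj : ∀ g : ℕ → K, Summable (fun n : ℕ => ((n : ℝ) + 1) ^ α * ‖g n‖ ^ 2) →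
      ∃ f : Wα, coord f = g)
    (T : Wα →L[ℂ] Wα)
    (hT0 : ∀ f : Wα, coord (T f) 0 = 0)
    (hTn : ∀ (f : Wα) (n : ℕ), coord (T f) (n + 1) = coord f n)
    (hTlow : ∀ f : Wα, ‖f‖ ≤ ‖T f‖)
    (M F : Submodule ℂ Wα) (hMclosed : IsClosed (M : Set Wα))
    (p : ℕ) (hFdim : Module.finrank ℂ F = p) (hFM : F ≤ Mᗮ)
    (hnear : ∀ f : Wα, T f ∈ M → f ∈ M ⊔ F)
    (hMnot : ¬ M ≤ LinearMap.range (T : Wα →ₗ[ℂ] Wα))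
    (e : Fin p → Wα) (he_on : Orthonormal ℂ e)
    (he_mem : ∀ j, e j ∈ F) (he_span : Submodule.span ℂ (Set.range e) = F)
    (r : ℕ) (fb : Fin r → Wα) (hfb_on : Orthonormal ℂ fb)
    (hfb_mem : ∀ i, fb i ∈ M ⊓ (M ⊓ LinearMap.range (T : Wα →ₗ[ℂ] Wα))ᗮ)
    (hfb_span : Submodule.span ℂ (Set.range fb) = M ⊓ (M ⊓ LinearMap.range (T : Wα →ₗ[ℂ] Wα))ᗮ) :
    ∃ N : Submodule ℂ
      (lp (fun _ : ℕ => EuclideanSpace ℂ (Fin r) × EuclideanSpace ℂ (Fin p)) 2),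
      -- N is invariant under the backward shift
      (∀ a ∈ N, ∀ b : lp (fun _ : ℕ =>
          EuclideanSpace ℂ (Fin r) × EuclideanSpace ℂ (Fin p)) 2,
        (∀ n : ℕ, b n = a (n + 1)) → b ∈ N) ∧
      -- (1) M is exactly the set of elements represented by pairs (c, d) ∈ N
      (∀ f : Wα, f ∈ M ↔ ∃ a ∈ N, ∀ n : ℕ,
        coord f n
          = (∑ i : Fin r, ∑ k ∈ Finset.range (n + 1),
              ((a k).1 i) • coord (fb i) (n - k))
            + ∑ j : Fin p, ∑ k ∈ Finset.range n,
              ((a k).2 j) • coord (e j) (n - 1 - k)) ∧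
      -- (2) the representation can be chosen with norm control
      (∀ f ∈ M, ∃ a ∈ N, (∀ n : ℕ,
        coord f n
          = (∑ i : Fin r, ∑ k ∈ Finset.range (n + 1),
              ((a k).1 i) • coord (fb i) (n - k))
            + ∑ j : Fin p, ∑ k ∈ Finset.range n,
              ((a k).2 j) • coord (e j) (n - 1 - k)) ∧
        (∑' k : ℕ, (‖(a k).1‖ ^ 2 + ‖(a k).2‖ ^ 2)) ≤ ‖f‖ ^ 2) := by
  classical
  haveI : Nonempty Wα := ⟨0⟩
  -- T is injective
  have hTinj : Function.Injective ⇑T := by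
    intro x y hxy
    have h1 : ‖x - y‖ ≤ ‖T (x - y)‖ := hTlow _
    rw [map_sub, hxy, sub_self, norm_zero] at h1
    have h2 : ‖x - y‖ = 0 := le_antisymm h1 (norm_nonneg _)
    simpa [sub_eq_zero] using norm_eq_zero.mp h2
  -- the range of T is closed
  have hrclosed : IsClosed ((LinearMap.range (T : Wα →ₗ[ℂ] Wα) : Submodule ℂ Wα) : Set Wα) := by
    have hanti : AntilipschitzWith 1 ⇑T := by
      apply AntilipschitzWith.of_le_mul_dist
      intro x y
      simp only [dist_eq_norm, NNReal.coe_one, one_mul, ← map_sub]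
      exact hTlow _
    have h1 := hanti.isClosed_range T.uniformContinuous
    convert h1 using 1
    exact LinearMap.coe_range _
  have hUclosed : IsClosed ((M ⊓ LinearMap.range (T : Wα →ₗ[ℂ] Wα) : Submodule ℂ Wα) : Set Wα) := by
    rw [Submodule.coe_inf]
    exact hMclosed.inter hrclosed
  haveI : CompleteSpace (M ⊓ LinearMap.range (T : Wα →ₗ[ℂ] Wα) : Submodule ℂ Wα) :=
    hUclosed.completeSpace_coe
  have fbM : ∀ i, fb i ∈ M := fun i => (hfb_mem i).1
  have fbUp : ∀ i, fb i ∈ (M ⊓ LinearMap.range (T : Wα →ₗ[ℂ] Wα))ᗮ := fun i => (hfb_mem i).2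
  -- the residual is orthogonal to all fb i
  have hwperp : ∀ (x : Wα) (i : Fin r),
      ⟪fb i, x - (∑ i' : Fin r, ⟪fb i', x⟫ • fb i')⟫ = 0 := by
    intro x i
    rw [inner_sub_right, hfb_on.inner_right_fintype]
    exact sub_self _
  -- the residual is in M
  have hwM : ∀ x ∈ M, x - ∑ i : Fin r, ⟪fb i, x⟫ • fb i ∈ M := by
    intro x hx
    exact M.sub_mem hx (Submodule.sum_mem _ fun i _ => M.smul_mem _ (fbM i))
  -- the residual is in M ⊓ range T
  have hwU : ∀ x ∈ M, x - ∑ i : Fin r, ⟪fb i, x⟫ • fb i ∈ M ⊓ LinearMap.range (T : Wα →ₗ[ℂ] Wα) := by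
    intro x hx
    set w := x - ∑ i : Fin r, ⟪fb i, x⟫ • fb i with hwdef
    have hwM' : w ∈ M := hwM x hx
    set Pw := ((Submodule.orthogonalProjection (M ⊓ LinearMap.range (T : Wα →ₗ[ℂ] Wα)) w : _) : Wα) with hPdef
    have hPU : Pw ∈ M ⊓ LinearMap.range (T : Wα →ₗ[ℂ] Wα) := (Submodule.orthogonalProjection (M ⊓ LinearMap.range (T : Wα →ₗ[ℂ] Wα)) w).2
    have hz : w - Pw ∈ Submodule.span ℂ (Set.range fb) := by
      rw [hfb_span]
      exact ⟨M.sub_mem hwM' hPU.1, Submodule.sub_starProjection_mem_orthogonal w⟩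
    obtain ⟨s, hs⟩ := (Submodule.mem_span_range_iff_exists_fun ℂ).mp hz
    have hs0 : ∀ i, s i = 0 := by
      intro i
      have h1 : ⟪fb i, w - Pw⟫ = 0 := by
        rw [inner_sub_right, hwperp x i, Submodule.inner_left_of_mem_orthogonal hPU (fbUp i), sub_zero]
      have h2 : ⟪fb i, (∑ i' : Fin r, s i' • fb i')⟫ = s i := hfb_on.inner_right_fintype s i
      rw [hs, h1] at h2
      exact h2.symm
    have hz0 : w - Pw = 0 := by
      rw [← hs]
      simp [hs0]
    have hwP : w = Pw := sub_eq_zero.mp hz0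
    rw [hwP]
    exact hPU
  -- the key maps
  obtain ⟨Cf, hCdef⟩ : ∃ Cf : Wα → EuclideanSpace ℂ (Fin r),
      Cf = fun x => WithLp.toLp 2 (fun i => ⟪fb i, x⟫) := ⟨_, rfl⟩
  obtain ⟨G, hGdef⟩ : ∃ G : Wα → Wα,
      G = fun x => Function.invFun ⇑T (x - ∑ i : Fin r, ⟪fb i, x⟫ • fb i) := ⟨_, rfl⟩
  have hTG : ∀ x ∈ M, T (G x) = x - ∑ i : Fin r, ⟪fb i, x⟫ • fb i := by
    intro x hx
    have h1 := (hwU x hx).2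
    rw [hGdef]
    exact Function.invFun_eq (LinearMap.mem_range.mp h1)
  obtain ⟨Df, hDdef⟩ : ∃ Df : Wα → EuclideanSpace ℂ (Fin p),
      Df = fun x => WithLp.toLp 2 (fun j => ⟪e j, G x⟫) := ⟨_, rfl⟩
  obtain ⟨St, hStdef⟩ : ∃ St : Wα → Wα,
      St = fun x => G x - ∑ j : Fin p, Df x j • e j := ⟨_, rfl⟩
  -- the step decomposition of G
  have hGdec : ∀ x ∈ M, St x ∈ M ∧ G x = St x + ∑ j : Fin p, Df x j • e j := by
    intro x hx
    have hTG' : T (G x) ∈ M := by rw [hTG x hx]; exact hwM x hx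
    have h1 := hnear (G x) hTG'
    rw [Submodule.mem_sup] at h1
    obtain ⟨m, hm, q, hq, hmq⟩ := h1
    rw [← he_span] at hq
    obtain ⟨t, ht⟩ := (Submodule.mem_span_range_iff_exists_fun ℂ).mp hq
    have hDt : ∀ j, Df x j = t j := by
      intro j
      have h1 : ⟪e j, G x⟫ = ⟪e j, m⟫ + ⟪e j, q⟫ := by rw [← hmq, inner_add_right]
      have h2 : ⟪e j, m⟫ = 0 := Submodule.inner_left_of_mem_orthogonal hm (hFM (he_mem j))
      have h3 : ⟪e j, q⟫ = t j := by rw [← ht]; exact he_on.inner_right_fintype t j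
      simp only [hDdef, PiLp.toLp_apply]
      rw [h1, h2, h3, zero_add]
    have hq' : ∑ j : Fin p, Df x j • e j = q := by
      rw [← ht]
      exact Finset.sum_congr rfl fun j _ => by rw [hDt j]
    constructor
    · have h4 : St x = m := by
        simp only [hStdef]
        rw [hq', ← hmq]
        abel
      rw [h4]; exact hm
    · simp only [hStdef]
      abel
  have hStM : ∀ x ∈ M, St x ∈ M := fun x hx => (hGdec x hx).1
  -- the full decomposition
  have hdec : ∀ x ∈ M,
      x = (∑ i : Fin r, Cf x i • fb i) + T (St x) + ∑ j : Fin p, Df x j • T (e j) := by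
    intro x hx
    have h1 : T (G x) = T (St x) + ∑ j : Fin p, Df x j • T (e j) := by
      conv_lhs => rw [(hGdec x hx).2]
      simp only [map_add, map_sum, map_smul]
    have h2 := hTG x hx
    rw [h1] at h2
    have h3 : ∑ i : Fin r, Cf x i • fb i = ∑ i : Fin r, ⟪fb i, x⟫ • fb i := by
      simp only [hCdef, PiLp.toLp_apply]
    rw [← h3, eq_sub_iff_add_eq] at h2
    conv_lhs => rw [← h2]
    abel
  -- coordinatewise decomposition
  have hcoord : ∀ x ∈ M, ∀ n : ℕ, coord x n =
      (∑ i : Fin r, Cf x i • coord (fb i) n) + coord (T (St x)) n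
        + ∑ j : Fin p, Df x j • coord (T (e j)) n := by
    intro x hx n
    conv_lhs => rw [hdec x hx]
    simp [map_add, map_sum, map_smul, Finset.sum_apply, Pi.add_apply, Pi.smul_apply]
  -- additivity on M
  have hGadd : ∀ x ∈ M, ∀ y ∈ M, G (x + y) = G x + G y := by
    intro x hx y hy
    apply hTinj
    rw [map_add, hTG x hx, hTG y hy, hTG (x + y) (M.add_mem hx hy)]
    simp only [inner_add_right, add_smul, Finset.sum_add_distrib]
    abel
  have hGsmul : ∀ (c : ℂ), ∀ x ∈ M, G (c • x) = c • G x := by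
    intro c x hx
    apply hTinj
    rw [map_smul, hTG x hx, hTG (c • x) (M.smul_mem c hx)]
    simp only [inner_smul_right, smul_smul, smul_sub, Finset.smul_sum]
  have hCadd : ∀ x y : Wα, Cf (x + y) = Cf x + Cf y := by
    intro x y
    ext i
    simp [hCdef, inner_add_right]
  have hCsmul : ∀ (c : ℂ) (x : Wα), Cf (c • x) = c • Cf x := by
    intro c x
    ext i
    simp [hCdef, inner_smul_right]
  have hDadd : ∀ x ∈ M, ∀ y ∈ M, Df (x + y) = Df x + Df y := by
    intro x hx y hy
    ext j
    simp [hDdef, hGadd x hx y hy, inner_add_right]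
  have hDsmul : ∀ (c : ℂ), ∀ x ∈ M, Df (c • x) = c • Df x := by
    intro c x hx
    ext j
    simp [hDdef, hGsmul c x hx, inner_smul_right]
  have hStadd : ∀ x ∈ M, ∀ y ∈ M, St (x + y) = St x + St y := by
    intro x hx y hy
    simp only [hStdef]
    rw [hGadd x hx y hy, hDadd x hx y hy]
    simp only [PiLp.add_apply, Pi.add_apply, add_smul, Finset.sum_add_distrib]
    abel
  have hStsmul : ∀ (c : ℂ), ∀ x ∈ M, St (c • x) = c • St x := by
    intro c x hx
    simp only [hStdef]
    rw [hGsmul c x hx, hDsmul c x hx]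
    simp only [PiLp.smul_apply, Pi.smul_apply, smul_eq_mul, ← smul_smul, smul_sub,
      Finset.smul_sum]
  -- iterates
  have hIterM : ∀ (n : ℕ), ∀ x ∈ M, St^[n] x ∈ M := by
    intro n
    induction n with
    | zero => intro x hx; simpa using hx
    | succ n ih =>
      intro x hx
      rw [Function.iterate_succ_apply]
      exact ih _ (hStM x hx)
  have hIteradd : ∀ (n : ℕ), ∀ x ∈ M, ∀ y ∈ M, St^[n] (x + y) = St^[n] x + St^[n] y := by
    intro n
    induction n with
    | zero => intro x _ y _; simp
    | succ n ih =>
      intro x hx y hy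
      simp only [Function.iterate_succ_apply]
      rw [hStadd x hx y hy]
      exact ih _ (hStM x hx) _ (hStM y hy)
  have hItersmul : ∀ (n : ℕ) (c : ℂ), ∀ x ∈ M, St^[n] (c • x) = c • St^[n] x := by
    intro n
    induction n with
    | zero => intro c x _; simp
    | succ n ih =>
      intro c x hx
      simp only [Function.iterate_succ_apply]
      rw [hStsmul c x hx]
      exact ih c _ (hStM x hx)
  have hSt0 : St 0 = 0 := by
    have h1 := hStsmul 0 0 M.zero_mem
    simpa using h1
  -- the representation identity
  have hrep : ∀ (n : ℕ), ∀ x ∈ M, coord x n =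
      (∑ i : Fin r, ∑ k ∈ Finset.range (n + 1), (Cf (St^[k] x) i) • coord (fb i) (n - k))
        + ∑ j : Fin p, ∑ k ∈ Finset.range n, (Df (St^[k] x) j) • coord (e j) (n - 1 - k) := by
    intro n
    induction n with
    | zero =>
      intro x hx
      rw [hcoord x hx 0]
      simp [hT0, Finset.sum_range_one]
    | succ n ih =>
      intro x hx
      rw [hcoord x hx (n + 1)]
      simp only [hTn]
      rw [ih (St x) (hStM x hx)]
      have e1 : ∀ i : Fin r,
          ∑ k ∈ Finset.range (n + 1 + 1), Cf (St^[k] x) i • coord (fb i) (n + 1 - k)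
          = (∑ k ∈ Finset.range (n + 1), Cf (St^[k] (St x)) i • coord (fb i) (n - k))
            + Cf x i • coord (fb i) (n + 1) := by
        intro i
        rw [Finset.sum_range_succ']
        have hxx : ∀ k : ℕ, n + 1 - (k + 1) = n - k := fun k => by omega
        have h0 : n + 1 - 0 = n + 1 := by omega
        simp only [Function.iterate_succ_apply, Function.iterate_zero_apply, hxx, h0]
      have e2 : ∀ j : Fin p,
          ∑ k ∈ Finset.range (n + 1), Df (St^[k] x) j • coord (e j) (n + 1 - 1 - k)
          = (∑ k ∈ Finset.range n, Df (St^[k] (St x)) j • coord (e j) (n - 1 - k))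
            + Df x j • coord (e j) n := by
        intro j
        rw [Finset.sum_range_succ']
        have hxx : ∀ k : ℕ, n + 1 - 1 - (k + 1) = n - 1 - k := fun k => by omega
        have h0 : n + 1 - 1 - 0 = n := by omega
        simp only [Function.iterate_succ_apply, Function.iterate_zero_apply, hxx, h0]
      calc (∑ i : Fin r, Cf x i • coord (fb i) (n + 1))
            + ((∑ i : Fin r, ∑ k ∈ Finset.range (n + 1),
                Cf (St^[k] (St x)) i • coord (fb i) (n - k))
              + ∑ j : Fin p, ∑ k ∈ Finset.range n,
                Df (St^[k] (St x)) j • coord (e j) (n - 1 - k))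
            + ∑ j : Fin p, Df x j • coord (e j) n
          = (∑ i : Fin r,
              ((∑ k ∈ Finset.range (n + 1), Cf (St^[k] (St x)) i • coord (fb i) (n - k))
                + Cf x i • coord (fb i) (n + 1)))
            + ∑ j : Fin p,
              ((∑ k ∈ Finset.range n, Df (St^[k] (St x)) j • coord (e j) (n - 1 - k))
                + Df x j • coord (e j) n) := by
            simp only [Finset.sum_add_distrib]
            abel
        _ = _ := by
            rw [← Finset.sum_congr rfl fun i _ => e1 i,
              ← Finset.sum_congr rfl fun j _ => e2 j]
  -- norm of orthonormal combinations
  have hON : ∀ (ι : Type) (_ : Fintype ι) (v : ι → Wα), Orthonormal ℂ v →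
      ∀ l : ι → ℂ, ‖∑ i : ι, l i • v i‖ ^ 2 = ∑ i : ι, ‖l i‖ ^ 2 := by
    intro ι _ v hv l
    have h1 : ⟪(∑ i : ι, l i • v i), (∑ i : ι, l i • v i)⟫
        = ∑ i : ι, (starRingEnd ℂ) (l i) * l i := hv.inner_sum l l Finset.univ
    rw [inner_self_eq_norm_sq_to_K] at h1
    simp only [RCLike.conj_mul] at h1
    exact_mod_cast h1
  -- the norm inequality for one step
  have hnormineq : ∀ x ∈ M,
      (∑ i : Fin r, ‖Cf x i‖ ^ 2) + ((∑ j : Fin p, ‖Df x j‖ ^ 2) + ‖St x‖ ^ 2) ≤ ‖x‖ ^ 2 := by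
    intro x hx
    have hxeq : x = (∑ i : Fin r, Cf x i • fb i)
        + (x - ∑ i : Fin r, ⟪fb i, x⟫ • fb i) := by
      have h0 : ∑ i : Fin r, Cf x i • fb i = ∑ i : Fin r, ⟪fb i, x⟫ • fb i := by
        simp only [hCdef, PiLp.toLp_apply]
      rw [h0]
      abel
    have horth : ⟪(∑ i : Fin r, Cf x i • fb i),
        (x - ∑ i : Fin r, ⟪fb i, x⟫ • fb i)⟫ = 0 := by
      rw [sum_inner]
      refine Finset.sum_eq_zero fun i _ => ?_
      rw [inner_smul_left, hwperp x i, mul_zero]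
    have h1 : ‖x‖ ^ 2 = ‖∑ i : Fin r, Cf x i • fb i‖ ^ 2
        + ‖x - ∑ i : Fin r, ⟪fb i, x⟫ • fb i‖ ^ 2 := by
      conv_lhs => rw [hxeq]
      rw [pow_two, pow_two, pow_two]
      exact norm_add_sq_eq_norm_sq_add_norm_sq_of_inner_eq_zero _ _ horth
    have h2 : ‖∑ i : Fin r, Cf x i • fb i‖ ^ 2 = ∑ i : Fin r, ‖Cf x i‖ ^ 2 :=
      hON _ _ fb hfb_on _
    have h4 : ‖G x‖ ^ 2 = (∑ j : Fin p, ‖Df x j‖ ^ 2) + ‖St x‖ ^ 2 := by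
      have hGeq : G x = (∑ j : Fin p, Df x j • e j) + St x := by
        rw [(hGdec x hx).2]; abel
      have horth2 : ⟪(∑ j : Fin p, Df x j • e j), St x⟫ = 0 := by
        rw [sum_inner]
        refine Finset.sum_eq_zero fun j _ => ?_
        rw [inner_smul_left, Submodule.inner_left_of_mem_orthogonal (hStM x hx) (hFM (he_mem j)),
          mul_zero]
      calc ‖G x‖ ^ 2 = ‖∑ j : Fin p, Df x j • e j‖ ^ 2 + ‖St x‖ ^ 2 := by
            conv_lhs => rw [hGeq]
            rw [pow_two, pow_two, pow_two]
            exact norm_add_sq_eq_norm_sq_add_norm_sq_of_inner_eq_zero _ _ horth2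
        _ = (∑ j : Fin p, ‖Df x j‖ ^ 2) + ‖St x‖ ^ 2 := by
            rw [hON _ _ e he_on]
    have h5 : ‖G x‖ ^ 2 ≤ ‖x - ∑ i : Fin r, ⟪fb i, x⟫ • fb i‖ ^ 2 := by
      rw [← hTG x hx]
      exact pow_le_pow_left₀ (norm_nonneg _) (hTlow _) 2
    linarith only [h1, h2, h4, h5]
  -- partial sums of the energy are bounded
  have hEbound : ∀ (m : ℕ), ∀ x ∈ M,
      ∑ k ∈ Finset.range m,
        ((∑ i : Fin r, ‖Cf (St^[k] x) i‖ ^ 2) + ∑ j : Fin p, ‖Df (St^[k] x) j‖ ^ 2)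
      ≤ ‖x‖ ^ 2 := by
    intro m
    induction m with
    | zero => intro x hx; simpa using sq_nonneg ‖x‖
    | succ m ih =>
      intro x hx
      rw [Finset.sum_range_succ']
      simp only [Function.iterate_succ_apply, Function.iterate_zero_apply]
      have h1 := ih (St x) (hStM x hx)
      have h2 := hnormineq x hx
      linarith only [h1, h2]
  -- Euclidean norms
  have hEucC : ∀ y : EuclideanSpace ℂ (Fin r), ‖y‖ ^ 2 = ∑ i : Fin r, ‖y i‖ ^ 2 := by
    intro y
    rw [EuclideanSpace.norm_eq, Real.sq_sqrt (by positivity)]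
  have hEucD : ∀ y : EuclideanSpace ℂ (Fin p), ‖y‖ ^ 2 = ∑ j : Fin p, ‖y j‖ ^ 2 := by
    intro y
    rw [EuclideanSpace.norm_eq, Real.sq_sqrt (by positivity)]
  -- summability of the energy
  have hEsummable : ∀ f ∈ M, Summable (fun k : ℕ =>
      (∑ i : Fin r, ‖Cf (St^[k] f) i‖ ^ 2) + ∑ j : Fin p, ‖Df (St^[k] f) j‖ ^ 2) := by
    intro f hf
    exact summable_of_sum_range_le (fun k => by positivity) (fun m => hEbound m f hf)
  -- membership in ℓ²
  have hmemlp : ∀ f ∈ M, Memℓp (fun k : ℕ =>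
      ((Cf (St^[k] f), Df (St^[k] f)) :
        EuclideanSpace ℂ (Fin r) × EuclideanSpace ℂ (Fin p))) 2 := by
    intro f hf
    apply memℓp_gen
    have hconv : ∀ y : ℝ, 0 ≤ y → y ^ ((2 : ℝ≥0∞).toReal) = y ^ 2 := by
      intro y hy
      rw [show ((2 : ℝ≥0∞).toReal) = ((2 : ℕ) : ℝ) by simp, Real.rpow_natCast]
    refine Summable.congr ?_ (fun k => (hconv _ (norm_nonneg _)).symm)
    refine Summable.of_nonneg_of_le (fun k => sq_nonneg _) (fun k => ?_) (hEsummable f hf)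
    rw [Prod.norm_def]
    rcases max_cases ‖Cf (St^[k] f)‖ ‖Df (St^[k] f)‖ with ⟨hmax, _⟩ | ⟨hmax, _⟩ <;>
      rw [hmax]
    · rw [hEucC]
      have h0 : (0:ℝ) ≤ ∑ j : Fin p, ‖Df (St^[k] f) j‖ ^ 2 := by positivity
      linarith only [h0]
    · rw [hEucD]
      have h0 : (0:ℝ) ≤ ∑ i : Fin r, ‖Cf (St^[k] f) i‖ ^ 2 := by positivity
      linarith only [h0]
  -- the submodule N
  refine ⟨{
      carrier := {a : lp (fun _ : ℕ =>
          EuclideanSpace ℂ (Fin r) × EuclideanSpace ℂ (Fin p)) 2 |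
        ∃ g ∈ M, ∀ n : ℕ, a n = (Cf (St^[n] g), Df (St^[n] g))}
      add_mem' := ?_
      zero_mem' := ?_
      smul_mem' := ?_ }, ?_, ?_, ?_⟩
  · rintro a b ⟨g, hg, hgn⟩ ⟨g', hg', hgn'⟩
    refine ⟨g + g', M.add_mem hg hg', fun n => ?_⟩
    have h1 : (↑(a + b) : ∀ _ : ℕ, EuclideanSpace ℂ (Fin r) × EuclideanSpace ℂ (Fin p)) n
        = a n + b n := rfl
    rw [h1, hgn n, hgn' n, hIteradd n g hg g' hg',
      hCadd _ _, hDadd _ (hIterM n g hg) _ (hIterM n g' hg'), Prod.mk_add_mk]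
  · refine ⟨0, M.zero_mem, fun n => ?_⟩
    have hG0 : G 0 = 0 := by
      have h1 := hGsmul 0 0 M.zero_mem
      simpa using h1
    have hIter0 : St^[n] (0 : Wα) = 0 := by
      induction n with
      | zero => simp
      | succ n ih => rw [Function.iterate_succ_apply, hSt0, ih]
    rw [hIter0]
    have hC0 : Cf 0 = 0 := by ext i; simp [hCdef]
    have hD0 : Df 0 = 0 := by ext j; simp [hDdef, hG0]
    rw [hC0, hD0]
    rfl
  · rintro c a ⟨g, hg, hgn⟩
    refine ⟨c • g, M.smul_mem c hg, fun n => ?_⟩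
    have h1 : (↑(c • a) : ∀ _ : ℕ, EuclideanSpace ℂ (Fin r) × EuclideanSpace ℂ (Fin p)) n
        = c • a n := rfl
    rw [h1, hgn n, hItersmul n c g hg, hCsmul, hDsmul c _ (hIterM n g hg), Prod.smul_mk]
  -- backward shift invariance
  · rintro a ⟨g, hg, hgn⟩ b hb
    refine ⟨St g, hStM g hg, fun n => ?_⟩
    rw [hb n, hgn (n + 1), Function.iterate_succ_apply]
  -- (1)
  · intro f
    constructor
    · intro hf
      refine ⟨⟨fun k => (Cf (St^[k] f), Df (St^[k] f)), hmemlp f hf⟩,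
        ⟨f, hf, fun n => rfl⟩, fun n => ?_⟩
      exact hrep n f hf
    · rintro ⟨a, ⟨g, hg, hgn⟩, hfa⟩
      have h1 : ∀ n, coord f n = coord g n := by
        intro n
        rw [hfa n, hrep n g hg]
        congr 1
        · refine Finset.sum_congr rfl fun i _ => Finset.sum_congr rfl fun k _ => ?_
          rw [hgn k]
        · refine Finset.sum_congr rfl fun j _ => Finset.sum_congr rfl fun k _ => ?_
          rw [hgn k]
      have h2 : f = g := hinj (funext h1)
      rw [h2]
      exact hg
  -- (2)
  · intro f hf
    refine ⟨⟨fun k => (Cf (St^[k] f), Df (St^[k] f)), hmemlp f hf⟩,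
      ⟨f, hf, fun n => rfl⟩, fun n => hrep n f hf, ?_⟩
    have hterm : ∀ k : ℕ,
        ‖((⟨fun k => (Cf (St^[k] f), Df (St^[k] f)), hmemlp f hf⟩ : lp (fun _ : ℕ =>
          EuclideanSpace ℂ (Fin r) × EuclideanSpace ℂ (Fin p)) 2) k).1‖ ^ 2
          + ‖((⟨fun k => (Cf (St^[k] f), Df (St^[k] f)), hmemlp f hf⟩ : lp (fun _ : ℕ =>
          EuclideanSpace ℂ (Fin r) × EuclideanSpace ℂ (Fin p)) 2) k).2‖ ^ 2
        = (∑ i : Fin r, ‖Cf (St^[k] f) i‖ ^ 2) + ∑ j : Fin p, ‖Df (St^[k] f) j‖ ^ 2 := by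
      intro k
      rw [hEucC, hEucD]
    rw [tsum_congr hterm]
    exact Real.tsum_le_of_sum_range_le (fun k => by positivity) (fun m => hEbound m f hf)
end

section
/- Let α ∈ [0,1] be a real number, let K be a nonzero finite-dimensional complex Hilbert space, let W_α be the Hilbert space of sequences f : ℕ → K with ‖f‖²_α := Σₙ (n+1)^α ‖f(n)‖²_K < ∞, and let T be the forward shift on W_α, (T f)(0) = 0 and (T f)(n+1) = f(n). Let M be a closed subspace of W_α that is nearly T⁻¹-invariant with defect p, with defect space F orthogonal to M, and assume M ⊆ T(W_α). Let (e_j)_{j=1}^{p} be an orthonormal basis of F. Then there exists a linear subspace N of ℓ²(ℕ, ℂᵖ), invariant under the backward shift d ↦ (n ↦ d(n+1)), such that: (1) M equals the set of all f ∈ W_α for which there exists d ∈ N with f(n) = Σ_{j=1}^{p} Σ_{k=0}^{n−1} d(k)_j · e_j(n−1−k) for all n ∈ ℕ; and (2) for every f ∈ M the element d ∈ N can be chosen so that Σ_{k∈ℕ} ‖d(k)‖² ≤ ‖f‖²_α. -/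
/-- description of nearly `T⁻¹`-invariant subspaces with defect `p` of the
weighted sequence space `W_α` (the coefficient model of the Dirichlet-type space `D_α`,
`α ∈ [0,1]`), case `M ⊆ T(W_α)`: there is a backward-shift invariant linear subspace `N` of
`ℓ²(ℕ, ℂᵖ)` parametrizing `M`, with norm control. -/
theorem stmt_19 (α : ℝ) (hα₀ : 0 ≤ α) (hα₁ : α ≤ 1)
    {K : Type*} [NormedAddCommGroup K] [InnerProductSpace ℂ K]
    [FiniteDimensional ℂ K] [Nontrivial K]
    {Wα : Type*} [NormedAddCommGroup Wα] [InnerProductSpace ℂ Wα] [CompleteSpace Wα]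
    (coord : Wα →ₗ[ℂ] (ℕ → K))
    (hinj : Function.Injective coord)
    (hsum : ∀ f : Wα, Summable fun n : ℕ => ((n : ℝ) + 1) ^ α * ‖coord f n‖ ^ 2)
    (hnorm : ∀ f : Wα, ‖f‖ ^ 2 = ∑' n : ℕ, ((n : ℝ) + 1) ^ α * ‖coord f n‖ ^ 2)
    (hsurj : ∀ g : ℕ → K, Summable (fun n : ℕ => ((n : ℝ) + 1) ^ α * ‖g n‖ ^ 2) →
      ∃ f : Wα, coord f = g)
    (T : Wα →L[ℂ] Wα)
    (hT0 : ∀ f : Wα, coord (T f) 0 = 0)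
    (hTn : ∀ (f : Wα) (n : ℕ), coord (T f) (n + 1) = coord f n)
    (hTlow : ∀ f : Wα, ‖f‖ ≤ ‖T f‖)
    (M F : Submodule ℂ Wα) (hMclosed : IsClosed (M : Set Wα))
    (p : ℕ) (hFdim : Module.finrank ℂ F = p) (hFM : F ≤ Mᗮ)
    (hnear : ∀ f : Wα, T f ∈ M → f ∈ M ⊔ F)
    (hMsub : M ≤ LinearMap.range (T : Wα →ₗ[ℂ] Wα))
    (e : Fin p → Wα) (he_on : Orthonormal ℂ e)
    (he_mem : ∀ j, e j ∈ F) (he_span : Submodule.span ℂ (Set.range e) = F) :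
    ∃ N : Submodule ℂ (lp (fun _ : ℕ => EuclideanSpace ℂ (Fin p)) 2),
      -- N is invariant under the backward shift
      (∀ a ∈ N, ∀ b : lp (fun _ : ℕ => EuclideanSpace ℂ (Fin p)) 2,
        (∀ n : ℕ, b n = a (n + 1)) → b ∈ N) ∧
      -- (1) M is exactly the set of elements represented by d ∈ N
      (∀ f : Wα, f ∈ M ↔ ∃ a ∈ N, ∀ n : ℕ,
        coord f n
          = ∑ j : Fin p, ∑ k ∈ Finset.range n, ((a k) j) • coord (e j) (n - 1 - k)) ∧
      -- (2) the representation can be chosen with norm control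
      (∀ f ∈ M, ∃ a ∈ N, (∀ n : ℕ,
        coord f n
          = ∑ j : Fin p, ∑ k ∈ Finset.range n, ((a k) j) • coord (e j) (n - 1 - k)) ∧
        (∑' k : ℕ, ‖a k‖ ^ 2) ≤ ‖f‖ ^ 2) := by
  classical
  -- T is injective
  have hTinj : Function.Injective T := by
    intro x y hxy
    have h := hTlow (x - y)
    rw [map_sub, hxy, sub_self, norm_zero] at h
    have h0 : ‖x - y‖ = 0 := le_antisymm h (norm_nonneg _)
    rwa [norm_eq_zero, sub_eq_zero] at h0
  -- partial inverse of T on M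
  have hpre : ∀ x : Wα, ∃ y : Wα, x ∈ M → T y = x := by
    intro x
    by_cases hx : x ∈ M
    · obtain ⟨y, hy⟩ := hMsub hx
      exact ⟨y, fun _ => hy⟩
    · exact ⟨0, fun h => absurd h hx⟩
  choose Ti hTi using hpre
  -- projection onto F
  set Pr : Wα → Wα := fun x => ∑ j, (inner ℂ (e j) x : ℂ) • e j with hPrdef
  have hPr_add : ∀ x y : Wα, Pr (x + y) = Pr x + Pr y := by
    intro x y
    simp [hPrdef, inner_add_right, add_smul, Finset.sum_add_distrib]
  have hPr_smul : ∀ (c : ℂ) (x : Wα), Pr (c • x) = c • Pr x := by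
    intro c x
    simp [hPrdef, inner_smul_right, smul_smul, Finset.smul_sum]
  have hPr_F : ∀ g ∈ F, Pr g = g := by
    intro g hg
    rw [← he_span] at hg
    obtain ⟨c, hc⟩ := (Submodule.mem_span_range_iff_exists_fun ℂ).mp hg
    simp only [hPrdef]
    rw [← hc]
    exact Finset.sum_congr rfl fun j _ => by rw [he_on.inner_right_fintype c j]
  have hPr_M : ∀ m ∈ M, Pr m = 0 := by
    intro m hm
    have : ∀ j, (inner ℂ (e j) m : ℂ) = 0 := by
      intro j
      have := (Submodule.mem_orthogonal M (e j)).mp (hFM (he_mem j)) m hm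
      rwa [← inner_eq_zero_symm] at this
    simp [hPrdef, this]
  have hPr_memF : ∀ x : Wα, Pr x ∈ F := by
    intro x
    exact Submodule.sum_mem F fun j _ => Submodule.smul_mem F _ (he_mem j)
  -- the step map
  set st : Wα → Wα := fun x => Ti x - Pr (Ti x) with hstdef
  have hdec : ∀ x ∈ M, st x ∈ M := by
    intro x hx
    have hTix : T (Ti x) ∈ M := by rw [hTi x hx]; exact hx
    obtain ⟨m, hm, g, hg, hmg⟩ := Submodule.mem_sup.mp (hnear _ hTix)
    have hPrTi : Pr (Ti x) = g := by
      rw [← hmg, hPr_add, hPr_M m hm, hPr_F g hg, zero_add]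
    have hstx : st x = m := by
      simp only [hstdef]
      rw [hPrTi, ← hmg]
      abel
    rw [hstx]; exact hm
  have hTi_eq : ∀ x : Wα, Ti x = st x + Pr (Ti x) := by
    intro x; simp [hstdef]
  -- norm estimate for one step
  have hnormPr : ∀ u : Wα, ‖Pr u‖ ^ 2 = ∑ j, ‖(inner ℂ (e j) u : ℂ)‖ ^ 2 := by
    intro u
    rw [← inner_self_eq_norm_sq (𝕜 := ℂ)]
    simp only [hPrdef]
    rw [he_on.inner_sum, map_sum]
    refine Finset.sum_congr rfl fun j _ => ?_
    rw [RCLike.conj_mul, ← RCLike.ofReal_pow, RCLike.ofReal_re]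
  have hnormstep : ∀ x ∈ M,
      ‖st x‖ ^ 2 + ∑ j, ‖(inner ℂ (e j) (Ti x) : ℂ)‖ ^ 2 ≤ ‖x‖ ^ 2 := by
    intro x hx
    have horth : (inner ℂ (st x) (Pr (Ti x)) : ℂ) = 0 :=
      (Submodule.mem_orthogonal M (Pr (Ti x))).mp (hFM (hPr_memF (Ti x))) _ (hdec x hx)
    have hsum2 : ‖Ti x‖ ^ 2 = ‖st x‖ ^ 2 + ‖Pr (Ti x)‖ ^ 2 := by
      conv_lhs => rw [hTi_eq x]
      simpa [← pow_two] using norm_add_sq_eq_norm_sq_add_norm_sq_of_inner_eq_zero _ _ horth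
    have hle : ‖Ti x‖ ^ 2 ≤ ‖x‖ ^ 2 := by
      have := hTlow (Ti x)
      rw [hTi x hx] at this
      exact pow_le_pow_left₀ (norm_nonneg _) this 2
    rw [← hnormPr, ← hsum2]
    exact hle
  -- iterates stay in M
  have hitM : ∀ f ∈ M, ∀ k, st^[k] f ∈ M := by
    intro f hf k
    induction k with
    | zero => simpa using hf
    | succ k ih =>
      rw [Function.iterate_succ_apply']
      exact hdec _ ih
  -- the coefficient sequence
  set Dc : Wα → ℕ → EuclideanSpace ℂ (Fin p) :=
    fun f k => WithLp.toLp 2 (fun j => (inner ℂ (e j) (Ti (st^[k] f)) : ℂ)) with hDcdef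
  -- coordinate formula
  have hG : ∀ n : ℕ, ∀ f ∈ M, coord f n
      = ∑ j, ∑ k ∈ Finset.range n, (Dc f k j) • coord (e j) (n - 1 - k) := by
    intro n
    induction n with
    | zero =>
      intro f hf
      simp only [Finset.range_zero, Finset.sum_empty, Finset.sum_const_zero]
      rw [← hTi f hf, hT0]
    | succ n ih =>
      intro f hf
      have h1 : coord f (n + 1) = coord (Ti f) n := by
        conv_lhs => rw [← hTi f hf]
        exact hTn _ n
      have h2 : coord (Ti f) n
          = coord (st f) n + ∑ j, (Dc f 0 j) • coord (e j) n := by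
        conv_lhs => rw [hTi_eq f]
        simp only [hPrdef, hDcdef, Function.iterate_zero_apply, map_add, map_sum,
          map_smul, Pi.add_apply, Finset.sum_apply, Pi.smul_apply]
      rw [h1, h2, ih (st f) (hdec f hf)]
      rw [← Finset.sum_add_distrib]
      refine Finset.sum_congr rfl fun j _ => ?_
      rw [Finset.sum_range_succ']
      congr 1
      refine Finset.sum_congr rfl fun k hk => ?_
      have hit : st^[k + 1] f = st^[k] (st f) := Function.iterate_succ_apply st k f
      have hsub : n + 1 - 1 - (k + 1) = n - 1 - k := by omega
      rw [hsub]
      simp only [hDcdef, hit]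
  -- partial-sum norm estimate
  have hH : ∀ f ∈ M, ∀ n : ℕ,
      (∑ k ∈ Finset.range n, ∑ j, ‖Dc f k j‖ ^ 2) + ‖st^[n] f‖ ^ 2 ≤ ‖f‖ ^ 2 := by
    intro f hf n
    induction n with
    | zero => simp
    | succ n ih =>
      rw [Finset.sum_range_succ, Function.iterate_succ_apply']
      have hstep := hnormstep (st^[n] f) (hitM f hf n)
      simp only [hDcdef]
      calc (∑ k ∈ Finset.range n, ∑ j, ‖Dc f k j‖ ^ 2)
            + (∑ j, ‖(inner ℂ (e j) (Ti (st^[n] f)) : ℂ)‖ ^ 2) + ‖st (st^[n] f)‖ ^ 2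
          = (∑ k ∈ Finset.range n, ∑ j, ‖Dc f k j‖ ^ 2)
            + (‖st (st^[n] f)‖ ^ 2 + ∑ j, ‖(inner ℂ (e j) (Ti (st^[n] f)) : ℂ)‖ ^ 2) := by ring
        _ ≤ (∑ k ∈ Finset.range n, ∑ j, ‖Dc f k j‖ ^ 2) + ‖st^[n] f‖ ^ 2 := by
            exact add_le_add_right hstep _
        _ ≤ ‖f‖ ^ 2 := ih
  have hpos : ∀ (f : Wα) (k : ℕ), (0:ℝ) ≤ ∑ j, ‖Dc f k j‖ ^ 2 :=
    fun f k => Finset.sum_nonneg fun j _ => sq_nonneg _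
  have hbound : ∀ f ∈ M, ∀ n : ℕ,
      (∑ k ∈ Finset.range n, ∑ j, ‖Dc f k j‖ ^ 2) ≤ ‖f‖ ^ 2 := by
    intro f hf n
    have := hH f hf n
    nlinarith [sq_nonneg ‖st^[n] f‖]
  have hnormE : ∀ (f : Wα) (k : ℕ), ‖Dc f k‖ ^ 2 = ∑ j, ‖Dc f k j‖ ^ 2 := by
    intro f k
    rw [EuclideanSpace.norm_eq]
    rw [Real.sq_sqrt (Finset.sum_nonneg fun j _ => sq_nonneg _)]
  have hmemlp : ∀ f ∈ M, Memℓp (Dc f) 2 := by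
    intro f hf
    apply memℓp_gen
    have h2 : ((2 : ENNReal)).toReal = (2:ℝ) := by norm_num
    rw [h2]
    have : (fun k => ‖Dc f k‖ ^ (2:ℝ)) = fun k => ∑ j, ‖Dc f k j‖ ^ 2 := by
      funext k
      rw [show ((2:ℝ)) = ((2:ℕ):ℝ) by norm_num, Real.rpow_natCast, hnormE]
    rw [this]
    exact summable_of_sum_range_le (hpos f) (hbound f hf)
  -- additivity/homogeneity of everything on M
  have hTi_add : ∀ x ∈ M, ∀ y ∈ M, Ti (x + y) = Ti x + Ti y := by
    intro x hx y hy
    apply hTinj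
    rw [map_add, hTi x hx, hTi y hy, hTi _ (M.add_mem hx hy)]
  have hTi_smul : ∀ (c : ℂ), ∀ x ∈ M, Ti (c • x) = c • Ti x := by
    intro c x hx
    apply hTinj
    rw [map_smul, hTi x hx, hTi _ (M.smul_mem c hx)]
  have hst_add : ∀ x ∈ M, ∀ y ∈ M, st (x + y) = st x + st y := by
    intro x hx y hy
    simp only [hstdef]
    rw [hTi_add x hx y hy, hPr_add]
    abel
  have hst_smul : ∀ (c : ℂ), ∀ x ∈ M, st (c • x) = c • st x := by
    intro c x hx
    simp only [hstdef]
    rw [hTi_smul c x hx, hPr_smul, smul_sub]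
  have hit_add : ∀ (k : ℕ), ∀ x ∈ M, ∀ y ∈ M, st^[k] (x + y) = st^[k] x + st^[k] y := by
    intro k
    induction k with
    | zero => intro x _ y _; simp
    | succ k ih =>
      intro x hx y hy
      rw [Function.iterate_succ_apply', Function.iterate_succ_apply',
        Function.iterate_succ_apply', ih x hx y hy,
        hst_add _ (hitM x hx k) _ (hitM y hy k)]
  have hit_smul : ∀ (k : ℕ) (c : ℂ), ∀ x ∈ M, st^[k] (c • x) = c • st^[k] x := by
    intro k
    induction k with
    | zero => intro c x _; simp
    | succ k ih =>
      intro c x hx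
      rw [Function.iterate_succ_apply', Function.iterate_succ_apply',
        ih c x hx, hst_smul _ _ (hitM x hx k)]
  have hDc_add : ∀ x ∈ M, ∀ y ∈ M, ∀ k j, Dc (x + y) k j = Dc x k j + Dc y k j := by
    intro x hx y hy k j
    simp only [hDcdef]
    rw [hit_add k x hx y hy, hTi_add _ (hitM x hx k) _ (hitM y hy k), inner_add_right]
  have hDc_smul : ∀ (c : ℂ), ∀ x ∈ M, ∀ k j, Dc (c • x) k j = c * Dc x k j := by
    intro c x hx k j
    simp only [hDcdef]
    rw [hit_smul k c x hx, hTi_smul _ _ (hitM x hx k), inner_smul_right]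
  have hTi_zero : Ti 0 = 0 := by
    apply hTinj
    rw [hTi 0 M.zero_mem, map_zero]
  have hDc_zero : ∀ k j, Dc (0:Wα) k j = 0 := by
    intro k j
    have hiter : st^[k] (0:Wα) = 0 := by
      induction k with
      | zero => simp
      | succ k ih =>
        rw [Function.iterate_succ_apply', ih]
        simp only [hstdef]
        rw [hTi_zero]
        simp [hPrdef]
    simp only [hDcdef, hiter, hTi_zero, inner_zero_right]
  -- define N
  refine ⟨{ carrier := {a | ∃ f, f ∈ M ∧ ∀ k, (a : ∀ n : ℕ, EuclideanSpace ℂ (Fin p)) k = Dc f k}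
          , add_mem' := ?_, zero_mem' := ?_, smul_mem' := ?_}, ?_, ?_, ?_⟩
  · rintro a b ⟨f, hf, ha⟩ ⟨g, hg, hb⟩
    refine ⟨f + g, M.add_mem hf hg, fun k => ?_⟩
    ext j
    have : (↑(a + b) : ∀ n : ℕ, EuclideanSpace ℂ (Fin p)) k = a k + b k := by
      rw [lp.coeFn_add]; rfl
    rw [this]
    show a k j + b k j = Dc (f + g) k j
    rw [ha k, hb k, hDc_add f hf g hg k j]
  · refine ⟨0, M.zero_mem, fun k => ?_⟩
    ext j
    have : ((0 : lp (fun _ : ℕ => EuclideanSpace ℂ (Fin p)) 2) : ∀ n : ℕ, EuclideanSpace ℂ (Fin p)) k = 0 := by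
      rw [lp.coeFn_zero]; rfl
    rw [this]
    show (0:ℂ) = Dc (0:Wα) k j
    rw [hDc_zero k j]
  · rintro c a ⟨f, hf, ha⟩
    refine ⟨c • f, M.smul_mem c hf, fun k => ?_⟩
    ext j
    have : (↑(c • a) : ∀ n : ℕ, EuclideanSpace ℂ (Fin p)) k = c • (a k) := by
      rw [lp.coeFn_smul]; rfl
    rw [this]
    show c * a k j = Dc (c • f) k j
    rw [ha k, hDc_smul c f hf k j]
  -- backward shift invariance
  · rintro a ⟨f, hf, ha⟩ b hb
    refine ⟨st f, hdec f hf, fun k => ?_⟩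
    rw [hb k, ha (k + 1)]
    simp only [hDcdef]
    rw [Function.iterate_succ_apply]
  -- statement (1)
  · intro f
    constructor
    · intro hf
      refine ⟨⟨Dc f, hmemlp f hf⟩, ⟨f, hf, fun k => rfl⟩, fun n => ?_⟩
      exact hG n f hf
    · rintro ⟨a, ⟨g, hg, hag⟩, hform⟩
      have hfg : coord f = coord g := by
        funext n
        rw [hform n, hG n g hg]
        refine Finset.sum_congr rfl fun j _ => Finset.sum_congr rfl fun k _ => ?_
        rw [hag k]
      have : f = g := hinj hfg
      rw [this]; exact hg
  -- statement (2)
  · intro f hf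
    refine ⟨⟨Dc f, hmemlp f hf⟩, ⟨f, hf, fun k => rfl⟩, fun n => hG n f hf, ?_⟩
    have hco : ∀ k : ℕ, ‖(⟨Dc f, hmemlp f hf⟩ : lp (fun _ : ℕ => EuclideanSpace ℂ (Fin p)) 2) k‖ ^ 2
        = ∑ j, ‖Dc f k j‖ ^ 2 := fun k => hnormE f k
    calc (∑' k : ℕ, ‖(⟨Dc f, hmemlp f hf⟩ : lp (fun _ : ℕ => EuclideanSpace ℂ (Fin p)) 2) k‖ ^ 2)
        = ∑' k : ℕ, ∑ j, ‖Dc f k j‖ ^ 2 := by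
          exact tsum_congr hco
      _ ≤ ‖f‖ ^ 2 := Real.tsum_le_of_sum_range_le (hpos f) (hbound f hf)
end
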